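/- arXiv:math/0211303 — 3 statements merged into one kernel-verified Lean document; each statement's English description precedes it below -/
import Mathlib

section
/- Let G be a finite connected weighted graph (electrical network), let A and B be disjoint nonempty sets of vertices, and let z be a vertex not in A ∪ B. Let τ_A and τ_B be the hitting times of A and B for the weighted random walk started at z. Then P(τ_B < τ_A) ≤ C(z,B)/C(z,A), where C(z,D) denotes the effective conductance between z and the set D. -/
open MeasureTheory

/-- First hitting time (from time 0) of a set `D` by the trajectory `ω`. -/
noncomputable def hitTime {V : Type*} (D : Set V) (ω : ℕ → V) : ℕ∞ :=
  sInf {n : ℕ∞ | ∃ k : ℕ, n = (k : ℕ∞) ∧ ω k ∈ D}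

/-- First hitting time from time 1 onwards of a set `D` by the trajectory `ω`. -/
noncomputable def hitTimePos {V : Type*} (D : Set V) (ω : ℕ → V) : ℕ∞ :=
  sInf {n : ℕ∞ | ∃ k : ℕ, n = (k : ℕ∞) ∧ 1 ≤ k ∧ ω k ∈ D}

open scoped ENNReal

namespace StmtAux
variable {V : Type*}

lemma hitTime_le {D : Set V} {ω : ℕ → V} {k : ℕ} (h : ω k ∈ D) :
    hitTime D ω ≤ (k : ℕ∞) := sInf_le ⟨k, rfl, h⟩

lemma hitTimePos_le {D : Set V} {ω : ℕ → V} {k : ℕ} (h1 : 1 ≤ k) (h : ω k ∈ D) :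
    hitTimePos D ω ≤ (k : ℕ∞) := sInf_le ⟨k, rfl, h1, h⟩

lemma lt_hitTimePos {D : Set V} {ω : ℕ → V} {n : ℕ} (h : ∀ j, 1 ≤ j → j ≤ n → ω j ∉ D) :
    (n : ℕ∞) < hitTimePos D ω := by
  have h2 : ((n+1 : ℕ) : ℕ∞) ≤ hitTimePos D ω := by
    apply le_sInf
    rintro x ⟨k, rfl, hk1, hk⟩
    have : ¬ k ≤ n := fun hle => h k hk1 hle hk
    exact_mod_cast Nat.succ_le_of_lt (by omega)
  calc (n : ℕ∞) < ((n+1:ℕ) : ℕ∞) := by exact_mod_cast Nat.lt_succ_self n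
  _ ≤ _ := h2

open Classical in
lemma exists_of_hitTime_lt {D : Set V} {ω : ℕ → V} {m : ℕ∞} (h : hitTime D ω < m) :
    ∃ k : ℕ, (k : ℕ∞) < m ∧ ω k ∈ D ∧ (∀ j < k, ω j ∉ D) := by
  obtain ⟨x, hx, hxm⟩ := sInf_lt_iff.mp h
  obtain ⟨k0, rfl, hk0⟩ := hx
  have hex : ∃ k, ω k ∈ D := ⟨k0, hk0⟩
  refine ⟨Nat.find hex, ?_, Nat.find_spec hex, fun j hj => Nat.find_min hex hj⟩
  have : Nat.find hex ≤ k0 := Nat.find_min' hex hk0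
  exact lt_of_le_of_lt (by exact_mod_cast this) hxm

open Classical in
lemma exists_of_hitTimePos_lt {D : Set V} {ω : ℕ → V} {m : ℕ∞} (h : hitTimePos D ω < m) :
    ∃ k : ℕ, 1 ≤ k ∧ (k : ℕ∞) < m ∧ ω k ∈ D ∧ (∀ j, 1 ≤ j → j < k → ω j ∉ D) := by
  obtain ⟨x, hx, hxm⟩ := sInf_lt_iff.mp h
  obtain ⟨k0, rfl, hk01, hk0⟩ := hx
  have hex : ∃ k, 1 ≤ k ∧ ω k ∈ D := ⟨k0, hk01, hk0⟩
  obtain ⟨h1, h2⟩ := Nat.find_spec hex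
  refine ⟨Nat.find hex, h1, ?_, h2, fun j hj1 hj2 => fun hjD => Nat.find_min hex hj2 ⟨hj1, hjD⟩⟩
  have : Nat.find hex ≤ k0 := Nat.find_min' hex ⟨hk01, hk0⟩
  exact lt_of_le_of_lt (by exact_mod_cast this) hxm

/-- Cylinder set. -/
def Cyl (n : ℕ) (p : ℕ → V) : Set (ℕ → V) := {ω | ∀ k ≤ n, ω k = p k}

/-- Path weight. -/
noncomputable def Wt (w : V → V → ℝ) (pi : V → ℝ) (n : ℕ) (p : ℕ → V) : ℝ :=
  ∏ k ∈ Finset.range n, w (p k) (p (k+1)) / pi (p k)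

lemma Wt_nonneg {w : V → V → ℝ} {pi : V → ℝ} (hw : ∀ u v, 0 ≤ w u v) (hpi : ∀ v, 0 ≤ pi v)
    (n : ℕ) (p : ℕ → V) : 0 ≤ Wt w pi n p :=
  Finset.prod_nonneg fun _ _ => div_nonneg (hw _ _) (hpi _)

lemma Wt_congr {w : V → V → ℝ} {pi : V → ℝ} {n : ℕ} {p q : ℕ → V}
    (h : ∀ k ≤ n, p k = q k) : Wt w pi n p = Wt w pi n q := by
  unfold Wt
  apply Finset.prod_congr rfl
  intro k hk
  rw [Finset.mem_range] at hk
  rw [h k (by omega), h (k+1) (by omega)]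

/-- Concatenation of paths. -/
def cat (n : ℕ) (p q : ℕ → V) : ℕ → V := fun k => if k ≤ n then p k else q (k - n)

lemma cat_left {n : ℕ} {p q : ℕ → V} {k : ℕ} (h : k ≤ n) : cat n p q k = p k := if_pos h

lemma cat_right {n : ℕ} {p q : ℕ → V} (h : q 0 = p n) (j : ℕ) : cat n p q (n + j) = q j := by
  unfold cat
  rcases Nat.eq_zero_or_pos j with rfl | hj
  · simp [h]
  · rw [if_neg (by omega)]
    congr 1
    omega

lemma Wt_cat {w : V → V → ℝ} {pi : V → ℝ} {n m : ℕ} {p q : ℕ → V} (h : q 0 = p n) :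
    Wt w pi (n + m) (cat n p q) = Wt w pi n p * Wt w pi m q := by
  unfold Wt
  rw [Finset.prod_range_add]
  congr 1
  · apply Finset.prod_congr rfl
    intro k hk
    rw [Finset.mem_range] at hk
    rw [cat_left (by omega), cat_left (by omega)]
  · apply Finset.prod_congr rfl
    intro j _
    rw [cat_right h j, show n + j + 1 = n + (j+1) by omega, cat_right h (j+1)]

/-- Index type for cylinders. -/
def I (V : Type*) := Σ n : ℕ, (Fin (n+1) → V)

instance [Finite V] : Countable (I V) := by unfold I; infer_instance

def fnI (i : I V) : ℕ → V := fun k => i.2 ⟨min k i.1, by omega⟩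

def mkI (n : ℕ) (p : ℕ → V) : I V := ⟨n, fun j => p j.val⟩

@[simp] lemma mkI_fst (n : ℕ) (p : ℕ → V) : (mkI n p).1 = n := rfl

lemma fnI_mkI {n : ℕ} {p : ℕ → V} {k : ℕ} (h : k ≤ n) : fnI (mkI n p) k = p k := by
  simp [fnI, mkI, Nat.min_eq_left h]

def cylI (i : I V) : Set (ℕ → V) := Cyl i.1 (fnI i)

lemma measurableSet_Cyl [MeasurableSpace V] (hms : ∀ x : V, MeasurableSet ({x} : Set V))
    (n : ℕ) (p : ℕ → V) : MeasurableSet (Cyl n p) := by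
  have : Cyl n p = ⋂ (k : ℕ) (_ : k ≤ n), (fun ω : ℕ → V => ω k) ⁻¹' {p k} := by
    ext ω; simp [Cyl]
  rw [this]
  exact MeasurableSet.iInter fun k => MeasurableSet.iInter fun _ =>
    (measurable_pi_apply k) (hms (p k))

lemma I_ext {i i' : I V} (h1 : i.1 = i'.1) (h2 : ∀ k ≤ i.1, fnI i k = fnI i' k) : i = i' := by
  obtain ⟨n, f⟩ := i
  obtain ⟨n', f'⟩ := i'
  dsimp at h1 h2
  subst h1
  congr 1
  funext j
  have := h2 j.val (by omega)
  simpa [fnI, Nat.min_eq_left (by omega : j.val ≤ n), Fin.eta] using this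

/-! ### Path predicates -/

/-- Paths from `z` hitting `A` for the first positive time at the end, avoiding returns
to `z` strictly inside. -/
def QAI (z : V) (A : Set V) (i : I V) : Prop :=
  fnI i 0 = z ∧ 1 ≤ i.1 ∧ fnI i i.1 ∈ A ∧
    ∀ k, 1 ≤ k → k < i.1 → fnI i k ∉ A ∧ fnI i k ≠ z

/-- Paths from `z` hitting `B` at the end, avoiding `A`, `B` and `z` strictly inside. -/
def EPI (z : V) (A B : Set V) (i : I V) : Prop :=
  fnI i 0 = z ∧ 1 ≤ i.1 ∧ fnI i i.1 ∈ B ∧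
    ∀ k, 1 ≤ k → k < i.1 → fnI i k ∉ A ∧ fnI i k ∉ B ∧ fnI i k ≠ z

/-- Loops at `z` avoiding `A ∪ B` entirely. -/
def UUI (z : V) (A B : Set V) (i : I V) : Prop :=
  fnI i 0 = z ∧ fnI i i.1 = z ∧ ∀ k ≤ i.1, fnI i k ∉ A ∧ fnI i k ∉ B

/-- Concatenated cylinder. -/
def catC (u e : I V) : Set (ℕ → V) := Cyl (u.1 + e.1) (cat u.1 (fnI u) (fnI e))

lemma mem_catC_facts {z : V} {A B : Set V} (hzA : z ∉ A)
    {u a : I V} (hu : UUI z A B u) (ha : QAI z A a) {ω : ℕ → V}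
    (hω : ω ∈ catC u a) :
    (ω (u.1 + a.1) ∈ A) ∧ (∀ k < u.1 + a.1, ω k ∉ A) ∧ (ω u.1 = z) ∧
      (∀ k, u.1 < k → k ≤ u.1 + a.1 → ω k ≠ z) ∧
      (∀ k ≤ u.1, ω k = fnI u k) ∧ (∀ j ≤ a.1, ω (u.1 + j) = fnI a j) := by
  obtain ⟨hu0, hun, huin⟩ := hu
  obtain ⟨ha0, ha1, haA, hain⟩ := ha
  have hcat0 : fnI a 0 = fnI u u.1 := by rw [ha0, hun]
  have hleft : ∀ k ≤ u.1, ω k = fnI u k := fun k hk => by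
    rw [hω k (by omega), cat_left hk]
  have hright : ∀ j ≤ a.1, ω (u.1 + j) = fnI a j := fun j hj => by
    rw [hω (u.1 + j) (by omega), cat_right hcat0]
  have hendA : ω (u.1 + a.1) ∈ A := by rw [hright a.1 le_rfl]; exact haA
  refine ⟨hendA, ?_, ?_, ?_, hleft, hright⟩
  · intro k hk
    rcases le_or_gt k u.1 with h | h
    · rw [hleft k h]; exact (huin k h).1
    · have hkk : k = u.1 + (k - u.1) := by omega
      rw [hkk, hright _ (by omega)]
      exact (hain (k - u.1) (by omega) (by omega)).1
  · rw [hleft u.1 le_rfl]; exact hun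
  · intro k h1 h2
    rcases eq_or_lt_of_le h2 with rfl | h
    · intro hkz
      rw [hkz] at hendA
      exact hzA hendA
    · have hkk : k = u.1 + (k - u.1) := by omega
      rw [hkk, hright _ (by omega)]
      exact (hain (k - u.1) (by omega) (by omega)).2

lemma pair_disjoint {z : V} {A B : Set V} (hzA : z ∉ A) :
    Pairwise (Function.onFun Disjoint
      (fun x : {i : I V // UUI z A B i} × {i : I V // QAI z A i} => catC x.1.1 x.2.1)) := by
  intro x y hxy
  rw [Function.onFun, Set.disjoint_left]
  intro ω hx hy
  obtain ⟨hxA, hxnA, hxz, hxnz, hxu, hxa⟩ := mem_catC_facts hzA x.1.2 x.2.2 hx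
  obtain ⟨hyA, hynA, hyz, hynz, hyu, hya⟩ := mem_catC_facts hzA y.1.2 y.2.2 hy
  have hn : x.1.1.1 + x.2.1.1 = y.1.1.1 + y.2.1.1 := by
    rcases lt_trichotomy (x.1.1.1 + x.2.1.1) (y.1.1.1 + y.2.1.1) with h | h | h
    · exact absurd hxA (hynA _ h)
    · exact h
    · exact absurd hyA (hxnA _ h)
  have hlu : x.1.1.1 = y.1.1.1 := by
    rcases lt_trichotomy x.1.1.1 y.1.1.1 with h | h | h
    · exact absurd hyz (hxnz _ h (by omega))
    · exact h
    · exact absurd hxz (hynz _ h (by omega))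
  apply hxy
  have hu' : x.1 = y.1 := by
    apply Subtype.ext
    apply I_ext hlu
    intro k hk
    rw [← hxu k hk, hyu k (by omega)]
  have ha' : x.2 = y.2 := by
    apply Subtype.ext
    apply I_ext (by omega)
    intro j hj
    rw [← hxa j hj, hlu, hya j (by omega)]
  exact Prod.ext hu' ha'

lemma EP_disjoint {z : V} {A B : Set V} :
    Pairwise (Function.onFun Disjoint
      (fun x : {i : I V // EPI z A B i} => cylI x.1)) := by
  have key : ∀ x y : {i : I V // EPI z A B i}, x.1.1 < y.1.1 →
      ∀ ω : ℕ → V, ω ∈ cylI x.1 → ω ∈ cylI y.1 → False := by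
    intro x y hlt ω hx hy
    have h1 : ω x.1.1 ∈ B := by rw [hx _ le_rfl]; exact x.2.2.2.1
    have h2 : ω x.1.1 ∉ B := by
      rw [hy _ (le_of_lt hlt)]
      exact (y.2.2.2.2 x.1.1 x.2.2.1 hlt).2.1
    exact h2 h1
  intro x y hxy
  rw [Function.onFun, Set.disjoint_left]
  intro ω hx hy
  rcases lt_trichotomy x.1.1 y.1.1 with h | h | h
  · exact key x y h ω hx hy
  · refine hxy (Subtype.ext (I_ext h fun k hk => ?_))
    rw [← hx k hk, hy k (by omega)]
  · exact key y x h ω hy hx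

lemma pi_pos [Fintype V] {w : V → V → ℝ} {pi : V → ℝ}
    (hnonneg : ∀ u v, 0 ≤ w u v)
    (hconn : ∀ u v : V, Relation.ReflTransGen (fun a b => 0 < w a b) u v)
    (hpi : ∀ v, pi v = ∑ u, w v u) {a b : V} (hab : a ≠ b) : ∀ v, 0 < pi v := by
  intro v
  have hex : ∃ u, u ≠ v := by
    rcases eq_or_ne a v with rfl | h
    · exact ⟨b, fun h => hab h.symm⟩
    · exact ⟨a, h⟩
  obtain ⟨u, hu⟩ := hex
  rcases Relation.ReflTransGen.cases_head (hconn v u) with rfl | ⟨c, hc, -⟩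
  · exact absurd rfl hu
  · rw [hpi]
    exact Finset.sum_pos' (fun i _ => hnonneg v i) ⟨c, Finset.mem_univ c, hc⟩

lemma hcyl_of_hchain [Fintype V] [MeasurableSpace V] {w : V → V → ℝ} {pi : V → ℝ}
    {μ : V → Measure (ℕ → V)}
    (hchain : ∀ (v : V) (n : ℕ) (path : Fin (n + 1) → V), path 0 = v →
      μ v {ω | ∀ i : Fin (n + 1), ω i.val = path i} =
        ENNReal.ofReal (∏ i : Fin n, w (path i.castSucc) (path i.succ) / pi (path i.castSucc)))
    (v : V) (n : ℕ) (p : ℕ → V) (hp : p 0 = v) :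
    μ v (Cyl n p) = ENNReal.ofReal (Wt w pi n p) := by
  have h := hchain v n (fun i => p i.val) (by simpa using hp)
  have hset : {ω : ℕ → V | ∀ i : Fin (n+1), ω i.val = (fun i : Fin (n+1) => p i.val) i}
      = Cyl n p := by
    ext ω
    constructor
    · intro hω k hk
      exact hω ⟨k, by omega⟩
    · intro hω i
      exact hω i.val (by omega)
  have hprod : (∏ i : Fin n, w ((fun i : Fin (n+1) => p i.val) i.castSucc)
        ((fun i : Fin (n+1) => p i.val) i.succ) / pi ((fun i : Fin (n+1) => p i.val) i.castSucc))
      = Wt w pi n p := by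
    rw [Wt, ← Fin.prod_univ_eq_prod_range]
    apply Finset.prod_congr rfl
    intro i _
    simp [Fin.coe_castSucc, Fin.val_succ]
  rw [hset, hprod] at h
  exact h

/-- Invariance of measurable sets under a coordinate-1 symmetry. -/
lemma invariant_of_measurable [MeasurableSpace V] (s : V → V)
    (hs : ∀ T : Set V, MeasurableSet T → ∀ x, s x ∈ T ↔ x ∈ T)
    (T : Set (ℕ → V)) (hT : MeasurableSet T) :
    (fun ω k => if k = 1 then s (ω 1) else ω k) ⁻¹' T = T := by
  set F : (ℕ → V) → (ℕ → V) := fun ω k => if k = 1 then s (ω 1) else ω k with hF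
  have hT' : MeasurableSet[MeasurableSpace.generateFrom
      {B : Set (ℕ → V) | ∃ (i : ℕ) (A : Set V), MeasurableSet A ∧ Function.eval i ⁻¹' A = B}] T := by
    rw [← MeasurableSpace.pi_eq_generateFrom_projections]
    exact hT
  clear hT
  induction T, hT' using MeasurableSpace.generateFrom_induction with
  | hC t ht _ =>
    obtain ⟨i, A, hA, rfl⟩ := ht
    ext ω
    simp only [Set.mem_preimage, Function.eval, hF]
    rcases eq_or_ne i 1 with rfl | hi
    · simpa using hs A hA (ω 1)
    · simp [hi]
  | empty => simp
  | compl t ht iht => rw [Set.preimage_compl, iht]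
  | iUnion f hf ihf => rw [Set.preimage_iUnion]; exact Set.iUnion_congr ihf

lemma separated [Fintype V] [MeasurableSpace V] {w : V → V → ℝ} {pi : V → ℝ}
    {μ : V → Measure (ℕ → V)}
    (hnonneg : ∀ u v, 0 ≤ w u v) (hsymm : ∀ u v, w u v = w v u)
    (hpi : ∀ v, pi v = ∑ u, w v u) (hpipos : ∀ v, 0 < pi v)
    (hcyl : ∀ v n (p : ℕ → V), p 0 = v → μ v (Cyl n p) = ENNReal.ofReal (Wt w pi n p))
    (b c : V) (hbc : b ≠ c) :
    ∃ T : Set V, MeasurableSet T ∧ ¬(b ∈ T ↔ c ∈ T) := by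
  by_contra hcon
  push_neg at hcon
  have hns : ∀ T : Set V, MeasurableSet T → (b ∈ T ↔ c ∈ T) := fun T hT => hcon T hT
  classical
  set s : V → V := fun x => if x = b then c else if x = c then b else x with hsdef
  have hs : ∀ T : Set V, MeasurableSet T → ∀ x, s x ∈ T ↔ x ∈ T := by
    intro T hT x
    rcases eq_or_ne x b with rfl | hxb
    · simp only [hsdef, if_pos rfl]
      exact (hns T hT).symm
    · rcases eq_or_ne x c with rfl | hxc
      · simp only [hsdef, if_neg hxb, if_pos rfl]
        exact hns T hT
      · simp [hsdef, hxb, hxc]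
  have hwc : ∀ v, w v c = 0 := by
    intro v
    set pb : ℕ → V := fun k => if k = 0 then v else b with hpb
    set pc : ℕ → V := fun k => if k = 0 then v else c with hpc
    have hWb : Wt w pi 1 pb = w v b / pi v := by simp [Wt, hpb]
    have hWc : Wt w pi 1 pc = w v c / pi v := by simp [Wt, hpc]
    -- μ v (Cyl 1 pb ∪ Cyl 1 pc) ≤ μ v (Cyl 1 pb)
    have hswap : ∀ t : Set (ℕ → V), MeasurableSet t → Cyl 1 pb ⊆ t → Cyl 1 pc ⊆ t := by
      intro t ht hsub ω hω
      have hmem : (fun k => if k = 1 then s (ω 1) else ω k) ∈ Cyl 1 pb := by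
        intro k hk
        interval_cases k
        · simpa [hpb, hpc] using hω 0 (by omega)
        · have h1 : ω 1 = c := by simpa [hpc] using hω 1 le_rfl
          simp [h1, hsdef, hbc.symm, hpb]
      have : ω ∈ (fun ω k => if k = 1 then s (ω 1) else ω k) ⁻¹' t := by
        simpa using hsub hmem
      rwa [invariant_of_measurable s hs t ht] at this
    have hUle : μ v (Cyl 1 pb ∪ Cyl 1 pc) ≤ μ v (Cyl 1 pb) := by
      rw [measure_eq_iInf (Cyl 1 pb)]
      refine le_iInf fun t => le_iInf fun hsub => le_iInf fun ht => ?_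
      exact measure_mono (Set.union_subset hsub (hswap t ht hsub))
    -- covering of {ω | ω 0 = v}
    have hcov : {ω : ℕ → V | ω 0 = v} ⊆
        ⋃ u : V, (if u = b then Cyl 1 pb ∪ Cyl 1 pc else if u = c then ∅
          else Cyl 1 (fun k => if k = 0 then v else u)) := by
      intro ω hω
      rcases eq_or_ne (ω 1) c with h1 | h1
      · refine Set.mem_iUnion.mpr ⟨b, ?_⟩
        rw [if_pos rfl]
        right
        intro k hk
        interval_cases k
        · simpa [hpc] using hω
        · simpa [hpc] using h1
      · refine Set.mem_iUnion.mpr ⟨ω 1, ?_⟩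
        rcases eq_or_ne (ω 1) b with h2 | h2
        · rw [if_pos h2]
          left
          intro k hk
          interval_cases k
          · simpa [hpb] using hω
          · simpa [hpb] using h2
        · rw [if_neg h2, if_neg h1]
          intro k hk
          interval_cases k
          · simpa using hω
          · simp
    have hone : μ v {ω : ℕ → V | ω 0 = v} = 1 := by
      have : {ω : ℕ → V | ω 0 = v} = Cyl 0 (fun _ => v) := by
        ext ω
        constructor
        · intro h k hk
          interval_cases k
          exact h
        · intro h
          exact h 0 le_rfl
      rw [this, hcyl v 0 _ rfl]
      simp [Wt]
    have hsum : (1 : ℝ≥0∞) ≤ ∑ u : V, (if u = c then 0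
        else ENNReal.ofReal (w v u / pi v)) := by
      calc (1:ℝ≥0∞) = μ v {ω : ℕ → V | ω 0 = v} := hone.symm
      _ ≤ ∑' u : V, μ v (if u = b then Cyl 1 pb ∪ Cyl 1 pc else if u = c then ∅
          else Cyl 1 (fun k => if k = 0 then v else u)) :=
        (measure_mono hcov).trans (measure_iUnion_le _)
      _ = ∑ u : V, μ v (if u = b then Cyl 1 pb ∪ Cyl 1 pc else if u = c then ∅
          else Cyl 1 (fun k => if k = 0 then v else u)) := tsum_fintype _
      _ ≤ ∑ u : V, (if u = c then 0 else ENNReal.ofReal (w v u / pi v)) := by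
        apply Finset.sum_le_sum
        intro u _
        rcases eq_or_ne u b with rfl | hub
        · rw [if_pos rfl, if_neg hbc]
          exact hUle.trans (le_of_eq (by rw [hcyl v 1 pb (by simp [hpb]), hWb]))
        · rcases eq_or_ne u c with rfl | huc
          · simp [hub]
          · rw [if_neg hub, if_neg huc, if_neg huc,
              hcyl v 1 _ (by simp)]
            apply le_of_eq
            congr 1
            simp [Wt]
    have htot : ∑ u : V, ENNReal.ofReal (w v u / pi v) = 1 := by
      rw [← ENNReal.ofReal_sum_of_nonneg (fun u _ => div_nonneg (hnonneg v u) (hpipos v).le)]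
      rw [← Finset.sum_div, ← hpi v, div_self (hpipos v).ne']
      simp
    -- conclude ofReal (w v c / pi v) = 0
    set Y := ∑ u ∈ Finset.univ.erase c, ENNReal.ofReal (w v u / pi v) with hY
    have hsplit : ENNReal.ofReal (w v c / pi v) + Y = 1 := by
      rw [hY, ← htot]
      exact Finset.add_sum_erase Finset.univ (fun u => ENNReal.ofReal (w v u / pi v))
        (Finset.mem_univ c)
    have hYle : (1:ℝ≥0∞) ≤ Y := by
      refine hsum.trans (le_of_eq ?_)
      rw [hY, ← Finset.sum_erase_add _ _ (Finset.mem_univ c), if_pos rfl, add_zero]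
      apply Finset.sum_congr rfl
      intro u hu
      rw [if_neg (Finset.mem_erase.mp hu).1]
    have hYtop : Y ≠ ⊤ := by
      intro h
      rw [h, add_top] at hsplit
      exact ENNReal.top_ne_one hsplit
    have hzero : ENNReal.ofReal (w v c / pi v) = 0 := by
      have h1 : Y = 1 := le_antisymm (by
        calc Y ≤ ENNReal.ofReal (w v c / pi v) + Y := le_add_self
        _ = 1 := hsplit) hYle
      rw [h1] at hsplit
      calc ENNReal.ofReal (w v c / pi v)
          = ENNReal.ofReal (w v c / pi v) + 1 - 1 :=
            (ENNReal.add_sub_cancel_right ENNReal.one_ne_top).symm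
      _ = 1 - 1 := by rw [hsplit]
      _ = 0 := by simp
    have := ENNReal.ofReal_eq_zero.mp hzero
    have hnn : 0 ≤ w v c / pi v := div_nonneg (hnonneg v c) (hpipos v).le
    have : w v c / pi v = 0 := le_antisymm this hnn
    rcases div_eq_zero_iff.mp this with h | h
    · exact h
    · exact absurd h (hpipos v).ne'
  have : pi c = 0 := by
    rw [hpi]
    apply Finset.sum_eq_zero
    intro u _
    rw [hsymm c u]
    exact hwc u
  exact absurd this (hpipos c).ne'

lemma singletons_measurable [Fintype V] [MeasurableSpace V] {w : V → V → ℝ} {pi : V → ℝ}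
    {μ : V → Measure (ℕ → V)}
    (hnonneg : ∀ u v, 0 ≤ w u v) (hsymm : ∀ u v, w u v = w v u)
    (hpi : ∀ v, pi v = ∑ u, w v u) (hpipos : ∀ v, 0 < pi v)
    (hcyl : ∀ v n (p : ℕ → V), p 0 = v → μ v (Cyl n p) = ENNReal.ofReal (Wt w pi n p)) :
    ∀ x : V, MeasurableSet ({x} : Set V) := by
  intro x
  have hsep : ∀ y : V, y ≠ x → ∃ T : Set V, MeasurableSet T ∧ x ∈ T ∧ y ∉ T := by
    intro y hy
    obtain ⟨T, hT, hiff⟩ := separated hnonneg hsymm hpi hpipos hcyl x y (Ne.symm hy)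
    by_cases hx : x ∈ T
    · exact ⟨T, hT, hx, fun hyT => hiff ⟨fun _ => hyT, fun _ => hx⟩⟩
    · have hyT : y ∈ T := by
        by_contra hyT
        exact hiff ⟨fun h => absurd h hx, fun h => absurd h hyT⟩
      exact ⟨Tᶜ, hT.compl, hx, by simp [hyT]⟩
  classical
  choose T hTmeas hTx hTy using hsep
  have : ({x} : Set V) = ⋂ (y : V) (h : y ≠ x), T y h := by
    ext v
    simp only [Set.mem_singleton_iff, Set.mem_iInter]
    constructor
    · rintro rfl y hy
      exact hTx y hy
    · intro h
      by_contra hvx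
      exact hTy v hvx (h v hvx)
  rw [this]
  exact MeasurableSet.iInter fun y => MeasurableSet.iInter fun hy => hTmeas y hy

open Classical in
lemma S_cover {z : V} {A B : Set V} (hzB : z ∉ B) :
    {ω : ℕ → V | hitTime B ω < hitTime A ω} ⊆ {ω : ℕ → V | ω 0 ≠ z} ∪
      ⋃ (x : {i : I V // UUI z A B i} × {i : I V // EPI z A B i}), catC x.1.1 x.2.1 := by
  intro ω hω
  by_cases hω0 : ω 0 = z
  swap
  · exact Or.inl hω0
  right
  obtain ⟨nB, hnBlt, hnBB, hnBmin⟩ := exists_of_hitTime_lt hω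
  have hnotA : ∀ j ≤ nB, ω j ∉ A := by
    intro j hj hjA
    have h1 : hitTime A ω ≤ (j : ℕ∞) := hitTime_le hjA
    have h2 : (nB : ℕ∞) < (j : ℕ∞) := lt_of_lt_of_le hnBlt h1
    have : nB < j := by exact_mod_cast h2
    omega
  have hnB1 : 1 ≤ nB := by
    rcases Nat.eq_zero_or_pos nB with rfl | h
    · exact absurd hnBB (by rw [hω0]; exact hzB)
    · exact h
  set t := Nat.findGreatest (fun k => ω k = z) nB with ht
  have htz : ω t = z := Nat.findGreatest_spec (P := fun k => ω k = z) (Nat.zero_le nB) hω0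
  have htle : t ≤ nB := Nat.findGreatest_le nB
  have htgr : ∀ m, t < m → m ≤ nB → ω m ≠ z := fun m h1 h2 => by
    have := Nat.findGreatest_is_greatest (ht ▸ h1) h2
    exact this
  have htlt : t < nB := lt_of_le_of_ne htle (fun h => hzB (by rw [← htz, h]; exact hnBB))
  refine Set.mem_iUnion.mpr ⟨⟨⟨mkI t ω, ?_⟩, ⟨mkI (nB - t) (fun j => ω (t + j)), ?_⟩⟩, ?_⟩
  · refine ⟨?_, ?_, ?_⟩
    · rw [fnI_mkI (Nat.zero_le t)]; exact hω0
    · rw [mkI_fst, fnI_mkI le_rfl]; exact htz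
    · intro k hk
      rw [mkI_fst] at hk
      rw [fnI_mkI hk]
      exact ⟨hnotA k (le_trans hk htle), hnBmin k (lt_of_le_of_lt hk htlt)⟩
  · refine ⟨?_, ?_, ?_, ?_⟩
    · rw [fnI_mkI (Nat.zero_le _)]; simpa using htz
    · rw [mkI_fst]; omega
    · rw [mkI_fst, fnI_mkI le_rfl, show t + (nB - t) = nB by omega]; exact hnBB
    · intro k hk1 hk2
      rw [mkI_fst] at hk2
      rw [fnI_mkI (le_of_lt hk2)]
      exact ⟨hnotA _ (by omega), hnBmin _ (by omega), htgr _ (by omega) (by omega)⟩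
  · intro k hk
    simp only [mkI_fst] at hk
    show ω k = cat (mkI t ω).1 (fnI (mkI t ω)) (fnI (mkI (nB - t) fun j => ω (t + j))) k
    rw [mkI_fst]
    rcases le_or_gt k t with h | h
    · rw [cat_left h, fnI_mkI h]
    · show ω k = if k ≤ t then _ else fnI (mkI (nB - t) fun j => ω (t + j)) (k - t)
      rw [if_neg (not_le.mpr h), fnI_mkI (by omega : k - t ≤ nB - t)]
      congr 1
      omega

open Classical in
lemma EA_cover {z : V} {A : Set V} :
    {ω : ℕ → V | hitTimePos A ω < hitTimePos {z} ω} ⊆ {ω : ℕ → V | ω 0 ≠ z} ∪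
      ⋃ (a : {i : I V // QAI z A i}), cylI a.1 := by
  intro ω hω
  by_cases hω0 : ω 0 = z
  swap
  · exact Or.inl hω0
  right
  obtain ⟨k, hk1, hklt, hkA, hkmin⟩ := exists_of_hitTimePos_lt hω
  have hknotz : ∀ j, 1 ≤ j → j ≤ k → ω j ≠ z := by
    intro j h1 h2 hz'
    have h3 : hitTimePos ({z} : Set V) ω ≤ (j : ℕ∞) :=
      hitTimePos_le h1 (by rw [hz']; exact Set.mem_singleton z)
    have h4 : (k : ℕ∞) < (j : ℕ∞) := lt_of_lt_of_le hklt h3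
    have : k < j := by exact_mod_cast h4
    omega
  refine Set.mem_iUnion.mpr ⟨⟨mkI k ω, ?_⟩, ?_⟩
  · refine ⟨by rw [fnI_mkI (Nat.zero_le k)]; exact hω0, by rw [mkI_fst]; exact hk1, ?_, ?_⟩
    · rw [mkI_fst, fnI_mkI le_rfl]; exact hkA
    · intro j hj1 hj2
      rw [mkI_fst] at hj2
      rw [fnI_mkI (le_of_lt hj2)]
      exact ⟨hkmin j hj1 hj2, hknotz j hj1 (le_of_lt hj2)⟩
  · intro j hj
    simp only [mkI_fst] at hj
    exact (fnI_mkI hj).symm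

lemma cylI_QA_subset {z : V} {A : Set V} (hzA : z ∉ A) {i : I V} (hi : QAI z A i) :
    cylI i ⊆ {ω : ℕ → V | hitTimePos A ω < hitTimePos {z} ω} := by
  intro ω hω
  have hend : ω i.1 ∈ A := by rw [hω i.1 le_rfl]; exact hi.2.2.1
  have h1 : hitTimePos A ω ≤ (i.1 : ℕ∞) := hitTimePos_le hi.2.1 hend
  have h2 : (i.1 : ℕ∞) < hitTimePos ({z} : Set V) ω := by
    apply lt_hitTimePos
    intro j hj1 hj2 hmem
    rw [Set.mem_singleton_iff] at hmem
    rcases eq_or_lt_of_le hj2 with rfl | h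
    · rw [hmem] at hend; exact hzA hend
    · exact (hi.2.2.2 j hj1 h).2 (by rw [← hω j (le_of_lt h)]; exact hmem)
  exact lt_of_le_of_lt h1 h2

lemma cylI_EP_subset {z : V} {A B : Set V} (hzB : z ∉ B) {i : I V} (hi : EPI z A B i) :
    cylI i ⊆ {ω : ℕ → V | hitTimePos B ω < hitTimePos {z} ω} := by
  intro ω hω
  have hend : ω i.1 ∈ B := by rw [hω i.1 le_rfl]; exact hi.2.2.1
  have h1 : hitTimePos B ω ≤ (i.1 : ℕ∞) := hitTimePos_le hi.2.1 hend
  have h2 : (i.1 : ℕ∞) < hitTimePos ({z} : Set V) ω := by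
    apply lt_hitTimePos
    intro j hj1 hj2 hmem
    rw [Set.mem_singleton_iff] at hmem
    rcases eq_or_lt_of_le hj2 with rfl | h
    · rw [hmem] at hend; exact hzB hend
    · exact (hi.2.2.2 j hj1 h).2.2 (by rw [← hω j (le_of_lt h)]; exact hmem)
  exact lt_of_le_of_lt h1 h2

open Classical in
lemma exists_QA_pos [Fintype V] {w : V → V → ℝ} {pi : V → ℝ} {z : V} {A : Set V}
    (hw : ∀ u v, 0 ≤ w u v) (hpipos : ∀ v, 0 < pi v) (hzA : z ∉ A)
    (hconn : ∀ u v : V, Relation.ReflTransGen (fun a b => 0 < w a b) u v)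
    (a0 : V) (ha0 : a0 ∈ A) :
    ∃ i : I V, QAI z A i ∧ 0 < Wt w pi i.1 (fnI i) := by
  -- first get a raw positive path from z into A
  have hraw : ∃ (n : ℕ) (q : ℕ → V), q 0 = z ∧ q n ∈ A ∧ ∀ k < n, 0 < w (q k) (q (k+1)) := by
    have H : ∀ v : V, Relation.ReflTransGen (fun a b => 0 < w a b) v a0 →
        ∃ (n : ℕ) (q : ℕ → V), q 0 = v ∧ q n ∈ A ∧ ∀ k < n, 0 < w (q k) (q (k+1)) := by
      intro v hv
      induction hv using Relation.ReflTransGen.head_induction_on with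
      | refl => exact ⟨0, fun _ => a0, rfl, ha0, by omega⟩
      | head hbc _ ih =>
        obtain ⟨n, q, hq0, hqA, hqpos⟩ := ih
        rename_i x c _
        refine ⟨n + 1, fun k => if k = 0 then x else q (k - 1), rfl, by simpa using hqA, ?_⟩
        intro k hk
        rcases Nat.eq_zero_or_pos k with rfl | hkpos
        · simpa [hq0] using hbc
        · have h1 : ¬ (k = 0) := by omega
          have h2 : ¬ (k + 1 = 0) := by omega
          simp only [h1, h2, if_false]
          have := hqpos (k - 1) (by omega)
          simpa [show k - 1 + 1 = k + 1 - 1 by omega] using this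
    exact H z (hconn z a0)
  obtain ⟨n, q, hq⟩ := hraw

  induction n using Nat.strong_induction_on generalizing q with
  | _ n ih =>
    obtain ⟨hq0, hqA, hqpos⟩ := hq
    have hex : ∃ k, q k ∈ A := ⟨n, hqA⟩
    set m := Nat.find hex with hm
    have hmA : q m ∈ A := Nat.find_spec hex
    have hmmin : ∀ j < m, q j ∉ A := fun j hj => Nat.find_min hex hj
    have hmn : m ≤ n := Nat.find_min' hex hqA
    have hm1 : 1 ≤ m := by
      rcases Nat.eq_zero_or_pos m with h | h
      · rw [h, hq0] at hmA; exact absurd hmA hzA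
      · exact h
    by_cases hzin : ∃ k, 1 ≤ k ∧ k < m ∧ q k = z
    · obtain ⟨k, hk1, hkm, hkz⟩ := hzin
      refine ih (n - k) (by omega) (fun j => q (k + j)) ⟨by simpa using hkz, ?_, ?_⟩
      · show q (k + (n - k)) ∈ A
        rw [show k + (n - k) = n by omega]; exact hqA
      · intro j hj
        have := hqpos (k + j) (by omega)
        simpa [show k + j + 1 = k + (j + 1) by omega] using this
    · push_neg at hzin
      refine ⟨mkI m q, ⟨?_, ?_, ?_, ?_⟩, ?_⟩
      · rw [fnI_mkI (Nat.zero_le m)]; exact hq0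
      · rw [mkI_fst]; exact hm1
      · rw [mkI_fst, fnI_mkI le_rfl]; exact hmA
      · intro k hk1 hk2
        rw [mkI_fst] at hk2
        rw [fnI_mkI (le_of_lt hk2)]
        exact ⟨hmmin k hk2, hzin k hk1 hk2⟩
      · rw [mkI_fst, Wt_congr (fun k hk => fnI_mkI hk)]
        apply Finset.prod_pos
        intro k hk
        rw [Finset.mem_range] at hk
        exact div_pos (hqpos k (by omega)) (hpipos _)

end StmtAux

open StmtAux in
/-- For the weighted random walk on a finite connected network started at `z ∉ A ∪ B`,
`P(τ_B < τ_A) ≤ C(z,B)/C(z,A)`, where the effective conductance `C(z,D)` is `π(z)` times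
the probability to hit `D` before returning to `z`. -/
theorem stmt0 {V : Type*} [Fintype V] [MeasurableSpace V]
    (w : V → V → ℝ) (hsymm : ∀ u v, w u v = w v u) (hnonneg : ∀ u v, 0 ≤ w u v)
    (hconn : ∀ u v : V, Relation.ReflTransGen (fun a b => 0 < w a b) u v)
    (pi : V → ℝ) (hpi : ∀ v, pi v = ∑ u, w v u)
    (μ : V → Measure (ℕ → V)) (hprob : ∀ v, IsProbabilityMeasure (μ v))
    (hchain : ∀ (v : V) (n : ℕ) (path : Fin (n + 1) → V), path 0 = v →
      μ v {ω | ∀ i : Fin (n + 1), ω i.val = path i} =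
        ENNReal.ofReal (∏ i : Fin n, w (path i.castSucc) (path i.succ) / pi (path i.castSucc)))
    (A B : Set V) (hA : A.Nonempty) (hB : B.Nonempty) (hAB : Disjoint A B)
    (z : V) (hz : z ∉ A ∪ B)
    (C : V → Set V → ℝ)
    (hC : ∀ (v : V) (D : Set V),
      C v D = pi v * (μ v {ω | hitTimePos D ω < hitTimePos {v} ω}).toReal) :
    (μ z {ω | hitTime B ω < hitTime A ω}).toReal ≤ C z B / C z A := by
  classical
  haveI := hprob z
  obtain ⟨a0, ha0⟩ := hA
  obtain ⟨b0, hb0⟩ := hB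
  have hzA : z ∉ A := fun h => hz (Set.mem_union_left _ h)
  have hzB : z ∉ B := fun h => hz (Set.mem_union_right _ h)
  have hab0 : a0 ≠ b0 := fun h => Set.disjoint_left.mp hAB ha0 (h ▸ hb0)
  have hpipos : ∀ v, 0 < pi v := pi_pos hnonneg hconn hpi hab0
  have hpinn : ∀ v, 0 ≤ pi v := fun v => (hpipos v).le
  have hcyl : ∀ v n (p : ℕ → V), p 0 = v → μ v (Cyl n p) = ENNReal.ofReal (Wt w pi n p) :=
    hcyl_of_hchain hchain
  have hms : ∀ x : V, MeasurableSet ({x} : Set V) :=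
    singletons_measurable hnonneg hsymm hpi hpipos hcyl
  have hmC : ∀ (n : ℕ) (p : ℕ → V), MeasurableSet (Cyl n p) := measurableSet_Cyl hms
  set WI : I V → ℝ≥0∞ := fun i => ENNReal.ofReal (Wt w pi i.1 (fnI i)) with hWI
  have hμcyl : ∀ i : I V, fnI i 0 = z → μ z (cylI i) = WI i := fun i h => hcyl z i.1 (fnI i) h
  -- the starting point is a.s. `z`
  have hmN : MeasurableSet {ω : ℕ → V | ω 0 = z} := by
    have he : {ω : ℕ → V | ω 0 = z} = (fun ω : ℕ → V => ω 0) ⁻¹' {z} := rfl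
    rw [he]; exact (measurable_pi_apply 0) (hms z)
  have hone : μ z {ω : ℕ → V | ω 0 = z} = 1 := by
    have he : {ω : ℕ → V | ω 0 = z} = Cyl 0 (fun _ => z) := by
      ext ω
      constructor
      · intro h k hk
        interval_cases k
        exact h
      · intro h
        exact h 0 le_rfl
    rw [he, hcyl z 0 _ rfl]
    simp [Wt]
  have hN : μ z {ω : ℕ → V | ω 0 ≠ z} = 0 := by
    have he : {ω : ℕ → V | ω 0 ≠ z} = {ω : ℕ → V | ω 0 = z}ᶜ := rfl
    rw [he, measure_compl hmN (measure_ne_top _ _), hone, measure_univ]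
    simp
  -- the three path sums
  set L : ℝ≥0∞ := ∑' u : {i : I V // UUI z A B i}, WI u.1 with hL
  set M : ℝ≥0∞ := ∑' e : {i : I V // EPI z A B i}, WI e.1 with hM
  set Ab : ℝ≥0∞ := ∑' a : {i : I V // QAI z A i}, WI a.1 with hAb
  have hcatWt : ∀ (u a : I V), fnI u 0 = z → fnI u u.1 = z → fnI a 0 = z →
      μ z (catC u a) = WI u * WI a := by
    intro u a h1 h2 h3
    have h0 : (cat u.1 (fnI u) (fnI a)) 0 = z := by rw [cat_left (Nat.zero_le _), h1]
    rw [catC, hcyl z _ _ h0, Wt_cat (by rw [h3, h2])]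
    exact ENNReal.ofReal_mul (Wt_nonneg hnonneg hpinn _ _)
  -- upper bound for the LHS measure
  have hSle : μ z {ω : ℕ → V | hitTime B ω < hitTime A ω} ≤ L * M := by
    calc μ z {ω : ℕ → V | hitTime B ω < hitTime A ω}
        ≤ μ z ({ω : ℕ → V | ω 0 ≠ z} ∪
          ⋃ (x : {i : I V // UUI z A B i} × {i : I V // EPI z A B i}), catC x.1.1 x.2.1) :=
          measure_mono (S_cover hzB)
      _ ≤ μ z {ω : ℕ → V | ω 0 ≠ z} +
          μ z (⋃ (x : {i : I V // UUI z A B i} × {i : I V // EPI z A B i}), catC x.1.1 x.2.1) :=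
          measure_union_le _ _
      _ ≤ 0 + ∑' (x : {i : I V // UUI z A B i} × {i : I V // EPI z A B i}),
            μ z (catC x.1.1 x.2.1) :=
          add_le_add (le_of_eq hN) (measure_iUnion_le _)
      _ = ∑' (x : {i : I V // UUI z A B i} × {i : I V // EPI z A B i}), WI x.1.1 * WI x.2.1 := by
          rw [zero_add]
          exact tsum_congr fun x => hcatWt _ _ x.1.2.1 x.1.2.2.1 x.2.2.1
      _ = L * M := by
          rw [ENNReal.tsum_prod']
          calc ∑' (u : {i : I V // UUI z A B i}), ∑' (e : {i : I V // EPI z A B i}),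
                WI u.1 * WI e.1
              = ∑' (u : {i : I V // UUI z A B i}), WI u.1 * M :=
                tsum_congr fun u => ENNReal.tsum_mul_left
            _ = L * M := ENNReal.tsum_mul_right
  -- renewal bound : L * Ab ≤ 1
  have hLA : L * Ab ≤ 1 := by
    have heq : μ z (⋃ (x : {i : I V // UUI z A B i} × {i : I V // QAI z A i}),
        catC x.1.1 x.2.1) = ∑' (x : {i : I V // UUI z A B i} × {i : I V // QAI z A i}),
        μ z (catC x.1.1 x.2.1) :=
      measure_iUnion (pair_disjoint hzA) (fun _ => hmC _ _)
    calc L * Ab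
        = ∑' (x : {i : I V // UUI z A B i} × {i : I V // QAI z A i}), WI x.1.1 * WI x.2.1 := by
          rw [ENNReal.tsum_prod']
          calc L * Ab = ∑' (u : {i : I V // UUI z A B i}), WI u.1 * Ab :=
                ENNReal.tsum_mul_right.symm
            _ = _ := tsum_congr fun u => ENNReal.tsum_mul_left.symm
      _ = ∑' (x : {i : I V // UUI z A B i} × {i : I V // QAI z A i}), μ z (catC x.1.1 x.2.1) :=
          (tsum_congr fun x => hcatWt _ _ x.1.2.1 x.1.2.2.1 x.2.2.1).symm
      _ = μ z (⋃ (x : {i : I V // UUI z A B i} × {i : I V // QAI z A i}), catC x.1.1 x.2.1) :=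
          heq.symm
      _ ≤ 1 := prob_le_one
  -- M is a lower bound for the B-event
  have hMle : M ≤ μ z {ω : ℕ → V | hitTimePos B ω < hitTimePos {z} ω} := by
    have heq : μ z (⋃ (e : {i : I V // EPI z A B i}), cylI e.1)
        = ∑' (e : {i : I V // EPI z A B i}), μ z (cylI e.1) :=
      measure_iUnion EP_disjoint (fun _ => hmC _ _)
    calc M = ∑' (e : {i : I V // EPI z A B i}), μ z (cylI e.1) :=
          tsum_congr fun e => (hμcyl e.1 e.2.1).symm
      _ = μ z (⋃ (e : {i : I V // EPI z A B i}), cylI e.1) := heq.symm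
      _ ≤ μ z {ω : ℕ → V | hitTimePos B ω < hitTimePos {z} ω} :=
          measure_mono (Set.iUnion_subset fun e => cylI_EP_subset hzB e.2)
  -- Ab is an upper bound for the A-event
  have hAble : μ z {ω : ℕ → V | hitTimePos A ω < hitTimePos {z} ω} ≤ Ab := by
    calc μ z {ω : ℕ → V | hitTimePos A ω < hitTimePos {z} ω}
        ≤ μ z ({ω : ℕ → V | ω 0 ≠ z} ∪ ⋃ (a : {i : I V // QAI z A i}), cylI a.1) :=
          measure_mono EA_cover
      _ ≤ μ z {ω : ℕ → V | ω 0 ≠ z} + μ z (⋃ (a : {i : I V // QAI z A i}), cylI a.1) :=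
          measure_union_le _ _
      _ ≤ 0 + ∑' (a : {i : I V // QAI z A i}), μ z (cylI a.1) :=
          add_le_add (le_of_eq hN) (measure_iUnion_le _)
      _ = Ab := by
          rw [zero_add]
          exact tsum_congr fun a => hμcyl a.1 a.2.1
  -- positivity
  obtain ⟨i0, hi0QA, hi0pos⟩ := exists_QA_pos hnonneg hpipos hzA hconn a0 ha0
  have hWI0pos : 0 < WI i0 := ENNReal.ofReal_pos.mpr hi0pos
  have hEApos : 0 < μ z {ω : ℕ → V | hitTimePos A ω < hitTimePos {z} ω} := by
    calc 0 < WI i0 := hWI0pos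
      _ = μ z (cylI i0) := (hμcyl i0 hi0QA.1).symm
      _ ≤ _ := measure_mono (cylI_QA_subset hzA hi0QA)
  have hAbpos : 0 < Ab := by
    calc 0 < WI i0 := hWI0pos
      _ ≤ Ab := ENNReal.le_tsum (⟨i0, hi0QA⟩ : {i : I V // QAI z A i})
  -- trivial loop gives 1 ≤ L
  have hL1 : (1 : ℝ≥0∞) ≤ L := by
    have htriv : UUI z A B (mkI 0 (fun _ => z)) := by
      refine ⟨fnI_mkI le_rfl, ?_, ?_⟩
      · rw [mkI_fst, fnI_mkI le_rfl]
      · intro k hk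
        rw [mkI_fst] at hk
        interval_cases k
        rw [fnI_mkI le_rfl]
        exact ⟨hzA, hzB⟩
    have hWtriv : WI (mkI 0 (fun _ => z)) = 1 := by
      rw [hWI]
      simp [Wt]
    calc (1 : ℝ≥0∞) = WI (mkI 0 (fun _ => z)) := hWtriv.symm
      _ ≤ L := ENNReal.le_tsum (⟨mkI 0 (fun _ => z), htriv⟩ : {i : I V // UUI z A B i})
  have hAb1 : Ab ≤ 1 := by
    calc Ab = 1 * Ab := (one_mul Ab).symm
      _ ≤ L * Ab := mul_le_mul_left hL1 Ab
      _ ≤ 1 := hLA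
  have hAbne0 : Ab ≠ 0 := ne_of_gt hAbpos
  have hAbnetop : Ab ≠ ⊤ := ne_top_of_le_ne_top ENNReal.one_ne_top hAb1
  have hMnetop : M ≠ ⊤ := ne_top_of_le_ne_top (measure_ne_top _ _) hMle
  -- assemble
  have hLinv : L ≤ 1 / Ab := (ENNReal.le_div_iff_mul_le (Or.inl hAbne0) (Or.inl hAbnetop)).mpr hLA
  have hLM : L * M ≤ M / Ab := by
    calc L * M ≤ (1 / Ab) * M := mul_le_mul_left hLinv M
      _ = M / Ab := by rw [one_div, ← ENNReal.div_eq_inv_mul]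
  have hMAnetop : M / Ab ≠ ⊤ := ne_of_lt (ENNReal.div_lt_top hMnetop hAbne0)
  have hLHS : (μ z {ω : ℕ → V | hitTime B ω < hitTime A ω}).toReal ≤ M.toReal / Ab.toReal := by
    calc (μ z {ω : ℕ → V | hitTime B ω < hitTime A ω}).toReal
        ≤ (M / Ab).toReal := ENNReal.toReal_mono hMAnetop (le_trans hSle hLM)
      _ = M.toReal / Ab.toReal := ENNReal.toReal_div _ _
  rw [hC z B, hC z A, mul_div_mul_left _ _ (ne_of_gt (hpipos z))]
  have hβ : M.toReal ≤ (μ z {ω : ℕ → V | hitTimePos B ω < hitTimePos {z} ω}).toReal :=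
    ENNReal.toReal_mono (measure_ne_top _ _) hMle
  have hα : (μ z {ω : ℕ → V | hitTimePos A ω < hitTimePos {z} ω}).toReal ≤ Ab.toReal :=
    ENNReal.toReal_mono hAbnetop hAble
  have hαpos : 0 < (μ z {ω : ℕ → V | hitTimePos A ω < hitTimePos {z} ω}).toReal :=
    ENNReal.toReal_pos (ne_of_gt hEApos) (measure_ne_top _ _)
  exact le_trans hLHS (div_le_div₀ ENNReal.toReal_nonneg hβ hαpos hα)
end

section
/- For a recurrent irreducible Markov chain on a finite state space with invariant measure π, the expected return time to a state z (started at z) equals π(S)/π(z), where π(S) is the total mass of π. -/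
open MeasureTheory

section KacAuxiliary

open MeasureTheory Finset
open scoped ENNReal

noncomputable section KacAux

variable {V : Type*}

/-- product of transition weights along a list path starting at `u`. -/
def kacWt (P : V → V → ℝ) : V → List V → ℝ
  | _, [] => 1
  | u, v :: t => P u v * kacWt P v t

/-- last state of the path `u :: l`. -/
def kacLast : V → List V → V
  | u, [] => u
  | _, v :: t => kacLast v t

/-- the trajectory prescribed by `u :: l` (constant after the end). -/
def kacPath : V → List V → ℕ → V
  | u, _, 0 => u
  | u, [], _ + 1 => u
  | _, v :: t, k + 1 => kacPath v t k

lemma kacWt_nonneg {P : V → V → ℝ} (h : ∀ u v, 0 ≤ P u v) :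
    ∀ (l : List V) (u : V), 0 ≤ kacWt P u l
  | [], _ => le_refl _ |>.trans_eq rfl |>.trans (by norm_num [kacWt])
  | v :: t, u => mul_nonneg (h u v) (kacWt_nonneg h t v)

lemma kacWt_append (P : V → V → ℝ) :
    ∀ (l : List V) (u r : V), kacWt P u (l ++ [r]) = kacWt P u l * P (kacLast u l) r
  | [], u, r => by simp [kacWt, kacLast]
  | v :: t, u, r => by
      show P u v * kacWt P v (t ++ [r]) = P u v * kacWt P v t * P (kacLast v t) r
      rw [kacWt_append P t v r]; ring

@[simp] lemma kacPath_zero (u : V) (l : List V) : kacPath u l 0 = u := by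
  cases l <;> rfl

lemma kacPath_append_lt (r : V) :
    ∀ (l : List V) (u : V) (k : ℕ), k ≤ l.length → kacPath u (l ++ [r]) k = kacPath u l k
  | [], u, 0, _ => rfl
  | [], u, k + 1, h => by simp at h
  | v :: t, u, 0, _ => rfl
  | v :: t, u, k + 1, h => by
      simpa [kacPath] using kacPath_append_lt r t v k (by simpa using h)

lemma kacPath_append_last (r : V) :
    ∀ (l : List V) (u : V), kacPath u (l ++ [r]) (l.length + 1) = r
  | [], u => rfl
  | v :: t, u => by simpa [kacPath] using kacPath_append_last r t v

lemma kacProd (P : V → V → ℝ) :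
    ∀ (l : List V) (u : V),
      (∏ i : Fin l.length, P (kacPath u l i.val) (kacPath u l (i.val + 1))) = kacWt P u l
  | [], u => by simp [kacWt]
  | v :: t, u => by
      rw [show (v :: t).length = t.length + 1 from rfl, Fin.prod_univ_succ]
      simp only [Fin.val_zero, Fin.val_succ, kacPath_zero]
      have h1 : kacPath u (v :: t) 1 = v := by simp [kacPath]
      have h2 : ∀ k : ℕ, kacPath u (v :: t) (k + 1) = kacPath v t k := fun k => rfl
      simp only [h1, h2, kacProd P t v, kacWt]

lemma kacPath_ofFn :
    ∀ (n : ℕ) (p : Fin n → V) (u : V) (k : ℕ) (h : k < n),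
      kacPath u (List.ofFn p) (k + 1) = p ⟨k, h⟩
  | 0, _, _, _, h => absurd h (by omega)
  | n + 1, p, u, 0, h => by
      rw [List.ofFn_succ]; simp [kacPath]
  | n + 1, p, u, k + 1, h => by
      rw [List.ofFn_succ]
      show kacPath (p 0) (List.ofFn fun i => p i.succ) (k + 1) = _
      rw [kacPath_ofFn n (fun i => p i.succ) (p 0) k (by omega)]
      congr 1


variable [Fintype V]

def kacG (P : V → V → ℝ) (z : V) [DecidableEq V] : ℕ → V → ℝ
  | 0, _ => 1
  | n + 1, v => ∑ w, if w = z then 0 else P v w * kacG P z n w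

lemma kacSum_cons (n : ℕ) (F : (Fin (n + 1) → V) → ℝ) :
    ∑ p : Fin (n + 1) → V, F p = ∑ v : V, ∑ q : Fin n → V, F (Fin.cons v q) := by
  rw [← Equiv.sum_comp (Fin.consEquiv (fun _ : Fin (n + 1) => V)) F, Fintype.sum_prod_type]
  rfl

lemma sum_ite_ne [DecidableEq V] (z : V) (F : V → ℝ) :
    ∑ w, (if w = z then 0 else F w) = (∑ w, F w) - F z := by
  have h : ∀ w, (if w = z then (0:ℝ) else F w) = F w - (if w = z then F w else 0) := by
    intro w; by_cases hw : w = z <;> simp [hw]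
  simp_rw [h]
  rw [Finset.sum_sub_distrib, Finset.sum_ite_eq' Finset.univ z F, if_pos (Finset.mem_univ z)]

variable {P : V → V → ℝ} {z : V}

lemma kacSum_all (hrow : ∀ u, ∑ v, P u v = 1) :
    ∀ (n : ℕ) (u : V), ∑ p : Fin n → V, kacWt P u (List.ofFn p) = 1
  | 0, u => by simp [kacWt]
  | n + 1, u => by
      rw [kacSum_cons n (fun p => kacWt P u (List.ofFn p))]
      have h : ∀ v : V, ∑ q : Fin n → V, kacWt P u (List.ofFn (Fin.cons v q))
          = P u v := by
        intro v
        have : ∀ q : Fin n → V, kacWt P u (List.ofFn (Fin.cons v q))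
            = P u v * kacWt P v (List.ofFn q) := by
          intro q
          rw [List.ofFn_succ]
          simp [kacWt, Fin.cons_zero, Fin.cons_succ]
        simp_rw [this]
        rw [← Finset.mul_sum, kacSum_all hrow n v, mul_one]
      simp_rw [h]
      exact hrow u

lemma kacSum_avoid [DecidableEq V] :
    ∀ (n : ℕ) (u : V),
      ∑ p : Fin n → V, (if ∀ i, p i ≠ z then kacWt P u (List.ofFn p) else 0) = kacG P z n u
  | 0, u => by simp [kacWt, kacG]
  | n + 1, u => by
      rw [kacSum_cons n]
      have h : ∀ v : V, (∑ q : Fin n → V,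
            if ∀ i : Fin (n + 1), (Fin.cons v q : Fin (n + 1) → V) i ≠ z then kacWt P u (List.ofFn (Fin.cons v q : Fin (n + 1) → V)) else 0)
          = (if v = z then 0 else P u v * kacG P z n v) := by
        intro v
        by_cases hv : v = z
        · subst hv
          rw [if_pos rfl]
          apply Finset.sum_eq_zero
          intro q _
          rw [if_neg]
          intro hc
          exact (hc 0) (Fin.cons_zero _ _)
        · rw [if_neg hv, ← kacSum_avoid n v, Finset.mul_sum]
          apply Finset.sum_congr rfl
          intro q _
          have hc : (∀ i : Fin (n + 1), (Fin.cons v q : Fin (n + 1) → V) i ≠ z) ↔ (∀ i, q i ≠ z) := by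
            rw [Fin.forall_fin_succ]
            simp [Fin.cons_zero, Fin.cons_succ, hv]
          have hwt : kacWt P u (List.ofFn (Fin.cons v q))
              = P u v * kacWt P v (List.ofFn q) := by
            rw [List.ofFn_succ]; simp [kacWt, Fin.cons_zero, Fin.cons_succ]
          rw [hwt]
          by_cases hq : ∀ i, q i ≠ z
          · rw [if_pos (hc.mpr hq), if_pos hq]
          · rw [if_neg (fun hh => hq (hc.mp hh)), if_neg hq, mul_zero]
      simp_rw [h]
      rfl

lemma kacG_nonneg [DecidableEq V] (hnonneg : ∀ u v, 0 ≤ P u v) :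
    ∀ (n : ℕ) (v : V), 0 ≤ kacG P z n v
  | 0, v => zero_le_one
  | n + 1, v => Finset.sum_nonneg fun w _ => by
      by_cases hw : w = z
      · simp [kacG, hw]
      · simp only [if_neg hw]
        exact mul_nonneg (hnonneg v w) (kacG_nonneg hnonneg n w)

lemma kacG_le_one [DecidableEq V] (hnonneg : ∀ u v, 0 ≤ P u v)
    (hrow : ∀ u, ∑ v, P u v = 1) :
    ∀ (n : ℕ) (v : V), kacG P z n v ≤ 1
  | 0, v => le_refl 1
  | n + 1, v => by
      show (∑ w, if w = z then 0 else P v w * kacG P z n w) ≤ 1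
      rw [← hrow v]
      apply Finset.sum_le_sum
      intro w _
      by_cases hw : w = z
      · simp [hw, hnonneg v z]
      · rw [if_neg hw]
        calc P v w * kacG P z n w ≤ P v w * 1 :=
          mul_le_mul_of_nonneg_left (kacG_le_one hnonneg hrow n w) (hnonneg v w)
        _ = P v w := mul_one _

lemma kacG_succ_le [DecidableEq V] (hnonneg : ∀ u v, 0 ≤ P u v)
    (hrow : ∀ u, ∑ v, P u v = 1) :
    ∀ (n : ℕ) (v : V), kacG P z (n + 1) v ≤ kacG P z n v
  | 0, v => kacG_le_one hnonneg hrow 1 v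
  | n + 1, v => by
      show (∑ w, if w = z then 0 else P v w * kacG P z (n+1) w)
        ≤ (∑ w, if w = z then 0 else P v w * kacG P z n w)
      apply Finset.sum_le_sum
      intro w _
      by_cases hw : w = z
      · simp [hw]
      · simp only [if_neg hw]
        exact mul_le_mul_of_nonneg_left (kacG_succ_le hnonneg hrow n w) (hnonneg v w)

lemma kacG_anti [DecidableEq V] (hnonneg : ∀ u v, 0 ≤ P u v)
    (hrow : ∀ u, ∑ v, P u v = 1) (v : V) : Antitone fun n => kacG P z n v :=
  antitone_nat_of_succ_le fun n => kacG_succ_le hnonneg hrow n v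

lemma kacG_lt_one [DecidableEq V] (hnonneg : ∀ u v, 0 ≤ P u v)
    (hrow : ∀ u, ∑ v, P u v = 1) {u v : V}
    (h : Relation.ReflTransGen (fun a b => 0 < P a b) u v) (hvz : 0 < P v z) :
    ∃ N, kacG P z N u < 1 := by
  induction h using Relation.ReflTransGen.head_induction_on with
  | refl =>
      refine ⟨1, ?_⟩
      show (∑ w, if w = z then 0 else P v w * kacG P z 0 w) < 1
      have : ∀ w, (if w = z then (0:ℝ) else P v w * kacG P z 0 w)
          = (if w = z then 0 else P v w) := by
        intro w; by_cases hw : w = z <;> simp [hw, kacG]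
      rw [Finset.sum_congr rfl fun w _ => this w, sum_ite_ne z (P v), hrow v]
      linarith
  | head hab _ ih =>
      obtain ⟨N, hN⟩ := ih
      rename_i a b _
      refine ⟨N + 1, ?_⟩
      show (∑ w, if w = z then 0 else P a w * kacG P z N w) < 1
      have hle : ∀ w, (if w = z then (0:ℝ) else P a w * kacG P z N w)
          ≤ (if w = z then 0 else P a w) := by
        intro w; by_cases hw : w = z
        · simp [hw]
        · simp only [if_neg hw]
          calc P a w * kacG P z N w ≤ P a w * 1 :=
            mul_le_mul_of_nonneg_left (kacG_le_one hnonneg hrow N w) (hnonneg a w)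
          _ = P a w := mul_one _
      have hsum : (∑ w, if w = z then (0:ℝ) else P a w) = 1 - P a z := by
        rw [sum_ite_ne z (P a), hrow a]
      by_cases hb : b = z
      · have hpaz : 0 < P a z := by rw [← hb]; exact hab
        calc (∑ w, if w = z then 0 else P a w * kacG P z N w)
            ≤ (∑ w, if w = z then 0 else P a w) := Finset.sum_le_sum fun w _ => hle w
          _ = 1 - P a z := hsum
          _ < 1 := by linarith
      · have hstrict : (∑ w, if w = z then 0 else P a w * kacG P z N w)
            < (∑ w, if w = z then 0 else P a w) := by
          apply Finset.sum_lt_sum (fun w _ => hle w)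
          refine ⟨b, Finset.mem_univ b, ?_⟩
          simp only [if_neg hb]
          exact mul_lt_of_lt_one_right hab hN
        calc (∑ w, if w = z then 0 else P a w * kacG P z N w)
            < 1 - P a z := by rw [← hsum]; exact hstrict
          _ ≤ 1 := by linarith [hnonneg a z]

variable [Nonempty V]

def kacM (P : V → V → ℝ) (z : V) [DecidableEq V] (N : ℕ) : ℝ :=
  Finset.univ.sup' Finset.univ_nonempty (kacG P z N)

lemma kacG_le_M [DecidableEq V] (N : ℕ) (v : V) : kacG P z N v ≤ kacM P z N :=
  Finset.le_sup' _ (Finset.mem_univ v)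

lemma kacM_nonneg [DecidableEq V] (hnonneg : ∀ u v, 0 ≤ P u v) (N : ℕ) :
    0 ≤ kacM P z N :=
  le_trans (kacG_nonneg hnonneg N (Classical.arbitrary V)) (kacG_le_M N _)

lemma kacG_add_le [DecidableEq V] (hnonneg : ∀ u v, 0 ≤ P u v) (b : ℕ) :
    ∀ (a : ℕ) (v : V), kacG P z (a + b) v ≤ kacM P z b * kacG P z a v
  | 0, v => by
      rw [Nat.zero_add]
      show kacG P z b v ≤ kacM P z b * 1
      rw [mul_one]; exact kacG_le_M b v
  | a + 1, v => by
      have hab : a + 1 + b = (a + b) + 1 := by omega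
      rw [hab]
      show (∑ w, if w = z then 0 else P v w * kacG P z (a + b) w)
        ≤ kacM P z b * (∑ w, if w = z then 0 else P v w * kacG P z a w)
      rw [Finset.mul_sum]
      apply Finset.sum_le_sum
      intro w _
      by_cases hw : w = z
      · simp [hw]
      · simp only [if_neg hw]
        calc P v w * kacG P z (a + b) w ≤ P v w * (kacM P z b * kacG P z a w) :=
          mul_le_mul_of_nonneg_left (kacG_add_le hnonneg b a w) (hnonneg v w)
        _ = kacM P z b * (P v w * kacG P z a w) := by ring

lemma kacM_add_le [DecidableEq V] (hnonneg : ∀ u v, 0 ≤ P u v) (a b : ℕ) :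
    kacM P z (a + b) ≤ kacM P z b * kacM P z a := by
  apply Finset.sup'_le
  intro v _
  calc kacG P z (a + b) v ≤ kacM P z b * kacG P z a v := kacG_add_le hnonneg b a v
  _ ≤ kacM P z b * kacM P z a :=
      mul_le_mul_of_nonneg_left (kacG_le_M a v) (kacM_nonneg hnonneg b)

lemma kacM_anti [DecidableEq V] (hnonneg : ∀ u v, 0 ≤ P u v)
    (hrow : ∀ u, ∑ v, P u v = 1) : Antitone (kacM P z) := by
  apply antitone_nat_of_succ_le
  intro n
  apply Finset.sup'_le
  intro v _
  exact le_trans (kacG_succ_le hnonneg hrow n v) (kacG_le_M n v)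

lemma kacM_pow [DecidableEq V] (hnonneg : ∀ u v, 0 ≤ P u v) (T : ℕ) :
    ∀ k : ℕ, kacM P z (k * T) ≤ (kacM P z T) ^ k
  | 0 => by
      rw [Nat.zero_mul, pow_zero]
      show kacM P z 0 ≤ 1
      apply Finset.sup'_le
      intro v _
      exact le_refl 1
  | k + 1 => by
      have h1 : kacM P z (k * T + T) ≤ kacM P z T * kacM P z (k * T) :=
        kacM_add_le hnonneg (k * T) T
      calc kacM P z ((k + 1) * T) = kacM P z (k * T + T) := by ring_nf
        _ ≤ kacM P z T * kacM P z (k * T) := h1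
        _ ≤ kacM P z T * kacM P z T ^ k :=
            mul_le_mul_of_nonneg_left (kacM_pow hnonneg T k) (kacM_nonneg hnonneg T)
        _ = kacM P z T ^ (k + 1) := by ring

lemma kacM_tendsto [DecidableEq V] (hnonneg : ∀ u v, 0 ≤ P u v)
    (hrow : ∀ u, ∑ v, P u v = 1)
    (hirr : ∀ u v, Relation.ReflTransGen (fun a b => 0 < P a b) u v)
    {u₀ : V} (hu₀ : 0 < P u₀ z) :
    Filter.Tendsto (kacM P z) Filter.atTop (nhds 0) := by
  have hNf : ∀ v : V, ∃ N, kacG P z N v < 1 := fun v =>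
    kacG_lt_one hnonneg hrow (hirr v u₀) hu₀
  choose Nf hNfs using hNf
  set T : ℕ := Finset.univ.sup Nf with hT
  have hGT : ∀ v, kacG P z T v < 1 := by
    intro v
    exact lt_of_le_of_lt (kacG_anti hnonneg hrow v (Finset.le_sup (Finset.mem_univ v))) (hNfs v)
  have hMT : kacM P z T < 1 := by
    rw [kacM, Finset.sup'_lt_iff]
    intro v _; exact hGT v
  have hT0 : 0 < T := by
    rcases Nat.eq_zero_or_pos T with h | h
    · exfalso
      have := hGT (Classical.arbitrary V)
      rw [h] at this
      exact absurd this (by norm_num [kacG])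
    · exact h
  have hMT0 : 0 ≤ kacM P z T := kacM_nonneg hnonneg T
  have hdiv : Filter.Tendsto (fun N : ℕ => N / T) Filter.atTop Filter.atTop := by
    apply Filter.tendsto_atTop_atTop.mpr
    intro b
    refine ⟨b * T, fun N h => ?_⟩
    have := Nat.div_le_div_right (c := T) h
    rwa [Nat.mul_div_cancel b hT0] at this
  have hpow : Filter.Tendsto (fun N : ℕ => kacM P z T ^ (N / T)) Filter.atTop (nhds 0) :=
    (tendsto_pow_atTop_nhds_zero_of_lt_one hMT0 hMT).comp hdiv
  apply squeeze_zero (fun N => kacM_nonneg hnonneg N) _ hpow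
  intro N
  calc kacM P z N ≤ kacM P z (N / T * T) :=
        kacM_anti hnonneg hrow (Nat.div_mul_le_self N T)
    _ ≤ kacM P z T ^ (N / T) := kacM_pow hnonneg T (N / T)

def kacC (P : V → V → ℝ) (pi : V → ℝ) (z : V) [DecidableEq V] (N : ℕ) : ℝ :=
  ∑ v, if v = z then 0 else pi v * kacG P z N v

lemma kacC_step [DecidableEq V] {pi : V → ℝ}
    (hinv : ∀ v, ∑ u, pi u * P u v = pi v) (N : ℕ) :
    kacC P pi z (N + 1) = kacC P pi z N - pi z * kacG P z (N + 1) z := by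
  have step1 : kacC P pi z (N + 1)
      = ∑ v, ∑ w, (if v = z then 0 else if w = z then 0
          else pi v * (P v w * kacG P z N w)) := by
    apply Finset.sum_congr rfl
    intro v _
    by_cases hv : v = z
    · simp [hv]
    · show (if v = z then 0 else pi v * kacG P z (N+1) v) = _
      simp only [if_neg hv]
      show pi v * (∑ w, if w = z then 0 else P v w * kacG P z N w) = _
      rw [Finset.mul_sum]
      apply Finset.sum_congr rfl
      intro w _
      by_cases hw : w = z <;> simp [hw]
  have step3 : ∀ w : V, (∑ v, if v = z then 0 else if w = z then 0
        else pi v * (P v w * kacG P z N w))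
      = (if w = z then 0 else (pi w - pi z * P z w) * kacG P z N w) := by
    intro w
    by_cases hw : w = z
    · simp [hw]
    · simp only [if_neg hw]
      have : ∀ v : V, (if v = z then 0 else pi v * (P v w * kacG P z N w))
          = (if v = z then 0 else pi v * P v w) * kacG P z N w := by
        intro v; by_cases hv : v = z <;> simp [hv] <;> ring
      rw [Finset.sum_congr rfl fun v _ => this v, ← Finset.sum_mul,
        sum_ite_ne z (fun v => pi v * P v w), hinv w]
  have step4 : ∀ w : V, (if w = z then (0:ℝ) else (pi w - pi z * P z w) * kacG P z N w)
      = (if w = z then 0 else pi w * kacG P z N w)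
        - pi z * (if w = z then 0 else P z w * kacG P z N w) := by
    intro w; by_cases hw : w = z
    · simp [hw]
    · simp only [if_neg hw]; ring
  rw [step1, Finset.sum_comm]
  rw [Finset.sum_congr rfl fun w _ => (step3 w).trans (step4 w), Finset.sum_sub_distrib,
    ← Finset.mul_sum]
  rfl

lemma kacC_partial [DecidableEq V] {pi : V → ℝ}
    (hinv : ∀ v, ∑ u, pi u * P u v = pi v) :
    ∀ N : ℕ, pi z * (∑ n ∈ Finset.range (N + 1), kacG P z n z) + kacC P pi z N
      = ∑ v, pi v
  | 0 => by
      have h0 : kacC P pi z 0 = (∑ v, pi v) - pi z := by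
        show (∑ v, if v = z then 0 else pi v * kacG P z 0 v) = _
        have : ∀ v : V, (if v = z then (0:ℝ) else pi v * kacG P z 0 v)
            = (if v = z then 0 else pi v) := by
          intro v; by_cases hv : v = z <;> simp [hv, kacG]
        rw [Finset.sum_congr rfl fun v _ => this v, sum_ite_ne z pi]
      rw [h0, Finset.sum_range_one]
      show pi z * kacG P z 0 z + _ = _
      show pi z * 1 + _ = _
      ring
  | N + 1 => by
      rw [Finset.sum_range_succ, kacC_step hinv N]
      have := kacC_partial hinv N
      ring_nf
      ring_nf at this
      linarith

lemma kacC_nonneg [DecidableEq V] {pi : V → ℝ} (hnonneg : ∀ u v, 0 ≤ P u v)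
    (hpos : ∀ v, 0 < pi v) (N : ℕ) : 0 ≤ kacC P pi z N := by
  apply Finset.sum_nonneg
  intro v _
  by_cases hv : v = z
  · simp [hv]
  · simp only [if_neg hv]
    exact mul_nonneg (hpos v).le (kacG_nonneg hnonneg N v)

lemma kacC_tendsto [DecidableEq V] {pi : V → ℝ} (hnonneg : ∀ u v, 0 ≤ P u v)
    (hrow : ∀ u, ∑ v, P u v = 1)
    (hirr : ∀ u v, Relation.ReflTransGen (fun a b => 0 < P a b) u v)
    (hpos : ∀ v, 0 < pi v) (hinv : ∀ v, ∑ u, pi u * P u v = pi v) :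
    Filter.Tendsto (kacC P pi z) Filter.atTop (nhds 0) := by
  obtain ⟨u₀, hu₀⟩ : ∃ u, 0 < P u z := by
    by_contra hc
    push_neg at hc
    have : ∀ u, pi u * P u z = 0 := fun u =>
      mul_eq_zero_of_right _ (le_antisymm (hc u) (hnonneg u z))
    have h0 : (∑ u, pi u * P u z) = 0 := Finset.sum_eq_zero fun u _ => this u
    rw [hinv z] at h0
    exact absurd h0 (hpos z).ne'
  have hM := kacM_tendsto hnonneg hrow hirr hu₀
  have hb : Filter.Tendsto (fun N => (∑ v, pi v) * kacM P z N) Filter.atTop (nhds 0) := by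
    have := hM.const_mul (∑ v, pi v)
    simpa using this
  apply squeeze_zero (kacC_nonneg hnonneg hpos) _ hb
  intro N
  show (∑ v, if v = z then 0 else pi v * kacG P z N v) ≤ _
  calc (∑ v, if v = z then 0 else pi v * kacG P z N v)
      ≤ ∑ v, pi v * kacM P z N := by
        apply Finset.sum_le_sum
        intro v _
        by_cases hv : v = z
        · simp only [if_pos hv]
          exact mul_nonneg (hpos v).le (kacM_nonneg hnonneg N)
        · simp only [if_neg hv]
          exact mul_le_mul_of_nonneg_left (kacG_le_M N v) (hpos v).le
    _ = (∑ v, pi v) * kacM P z N := by rw [Finset.sum_mul]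

section Meas

variable [MeasurableSpace V]

def kacInd (u v : V) : Prop := ∀ S : Set V, MeasurableSet S → (u ∈ S ↔ v ∈ S)

omit [Fintype V] [Nonempty V] in
lemma kacInd_refl (u : V) : kacInd u u := fun _ _ => Iff.rfl

omit [Fintype V] [Nonempty V] in
lemma kacInd_symm {u v : V} (h : kacInd u v) : kacInd v u := fun S hS => (h S hS).symm

omit [Fintype V] [Nonempty V] in
lemma kacInd_trans {u v w : V} (h : kacInd u v) (h' : kacInd v w) : kacInd u w :=
  fun S hS => (h S hS).trans (h' S hS)

omit [Fintype V] [Nonempty V] in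
lemma kacInd_atom_meas [Finite V] (v : V) : MeasurableSet {u | kacInd u v} := by
  have heq : {u | kacInd u v} = ⋂₀ {S : Set V | MeasurableSet S ∧ v ∈ S} := by
    ext u
    constructor
    · intro h S ⟨hS, hv⟩
      exact (h S hS).mpr hv
    · intro h S hS
      constructor
      · intro hu
        by_contra hv
        have : u ∈ Sᶜ := h Sᶜ ⟨hS.compl, hv⟩
        exact this hu
      · intro hv
        exact h S ⟨hS, hv⟩
  rw [heq]
  exact MeasurableSet.sInter ((Set.toFinite _).countable) fun S hS => hS.1

omit [Fintype V] [Nonempty V] in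
lemma kacInv {M : Set (ℕ → V)} (hM : MeasurableSet M) {ω ω' : ℕ → V}
    (h : ∀ i, kacInd (ω i) (ω' i)) : ω ∈ M ↔ ω' ∈ M := by
  let m' : MeasurableSpace (ℕ → V) :=
    { MeasurableSet' := fun M => ∀ ω ω' : ℕ → V, (∀ i, kacInd (ω i) (ω' i)) → (ω ∈ M ↔ ω' ∈ M)
      measurableSet_empty := fun _ _ _ => Iff.rfl
      measurableSet_compl := fun s hs ω ω' h => not_congr (hs ω ω' h)
      measurableSet_iUnion := fun f hf ω ω' h => by
        simp only [Set.mem_iUnion]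
        exact exists_congr fun i => hf i ω ω' h }
  have key : @Measurable (ℕ → V) (ℕ → V) m' MeasurableSpace.pi id := by
    rw [measurable_pi_iff]
    intro i S hS
    exact fun ω ω' h => h i S hS
  exact key hM ω ω' h

def kacCyl (z : V) (l : List V) : Set (ℕ → V) :=
  {ω | ∀ i : Fin (l.length + 1), ω i.val = kacPath z l i.val}

def kacHull (z : V) (l : List V) : Set (ℕ → V) :=
  {ω | ∀ i : Fin (l.length + 1), kacInd (ω i.val) (kacPath z l i.val)}

omit [Fintype V] [Nonempty V] in
lemma kacHull_meas [Finite V] (z : V) (l : List V) : MeasurableSet (kacHull z l) := by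
  have : kacHull z l
      = ⋂ i : Fin (l.length + 1), (fun ω : ℕ → V => ω i.val) ⁻¹' {u | kacInd u (kacPath z l i.val)} := by
    ext ω; simp [kacHull, Set.mem_iInter]
  rw [this]
  exact MeasurableSet.iInter fun i =>
    (measurable_pi_apply i.val) (kacInd_atom_meas (kacPath z l i.val))

omit [Fintype V] [Nonempty V] in
lemma kacCyl_hull (ν : Measure (ℕ → V)) (z : V) (l : List V) :
    ν (kacCyl z l) = ν (kacHull z l) := by
  apply le_antisymm
  · exact measure_mono fun ω h i => by rw [h i]; exact kacInd_refl _
  · rw [measure_eq_iInf (kacCyl z l)]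
    apply le_iInf; intro t; apply le_iInf; intro hst; apply le_iInf; intro ht
    apply measure_mono
    intro ω' hω'
    set ω : ℕ → V := fun k => if h : k < l.length + 1 then kacPath z l k else ω' k with hω
    have hωc : ω ∈ kacCyl z l := by
      intro i
      simp only [hω, dif_pos i.isLt]
    have hind : ∀ k, kacInd (ω k) (ω' k) := by
      intro k
      by_cases hk : k < l.length + 1
      · simp only [hω, dif_pos hk]
        exact kacInd_symm (hω' ⟨k, hk⟩)
      · simp only [hω, dif_neg hk]
        exact kacInd_refl _
    exact (kacInv ht hind).mp (hst hωc)

end Meas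

section Chain

variable [MeasurableSpace V] {P : V → V → ℝ} {z : V} {μ : V → Measure (ℕ → V)}

lemma kacLast_append {W : Type*} : ∀ (l : List W) (u r : W), kacLast u (l ++ [r]) = r
  | [], _, _ => rfl
  | v :: t, _, r => kacLast_append t v r

lemma kac_exists_path (hirr : ∀ u v, Relation.ReflTransGen (fun a b => 0 < P a b) u v)
    (v : V) : ∃ l : List V, kacLast z l = v ∧ 0 < kacWt P z l := by
  have h := hirr z v
  induction h with
  | refl => exact ⟨[], rfl, one_pos⟩
  | tail hab hbc ih =>
      obtain ⟨l, hlast, hwt⟩ := ih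
      exact ⟨l ++ [_], kacLast_append l z _, by
        rw [kacWt_append, hlast]; exact mul_pos hwt hbc⟩

lemma kac_cyl_measure
    (hchain : ∀ (v : V) (n : ℕ) (path : Fin (n + 1) → V), path 0 = v →
      μ v {ω | ∀ i : Fin (n + 1), ω i.val = path i} =
        ENNReal.ofReal (∏ i : Fin n, P (path i.castSucc) (path i.succ)))
    (l : List V) : μ z (kacCyl z l) = ENNReal.ofReal (kacWt P z l) := by
  have h := hchain z l.length (fun i : Fin (l.length + 1) => kacPath z l i.val)
    (kacPath_zero z l)
  rw [show {ω : ℕ → V | ∀ i : Fin (l.length + 1),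
      ω i.val = kacPath z l i.val} = kacCyl z l from rfl] at h
  rw [h]
  congr 1
  have : ∀ i : Fin l.length,
      P (kacPath z l (i.castSucc).val) (kacPath z l (i.succ).val)
        = P (kacPath z l i.val) (kacPath z l (i.val + 1)) := fun i => rfl
  rw [Finset.prod_congr rfl fun i _ => this i]
  exact kacProd P l z

lemma kac_no_bad
    (hnonneg : ∀ u v, 0 ≤ P u v) (hrow : ∀ u, ∑ v, P u v = 1)
    (hirr : ∀ u v, Relation.ReflTransGen (fun a b => 0 < P a b) u v)
    {pi : V → ℝ} (hpos : ∀ v, 0 < pi v) (hinv : ∀ v, ∑ u, pi u * P u v = pi v)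
    (hchain : ∀ (v : V) (n : ℕ) (path : Fin (n + 1) → V), path 0 = v →
      μ v {ω | ∀ i : Fin (n + 1), ω i.val = path i} =
        ENNReal.ofReal (∏ i : Fin n, P (path i.castSucc) (path i.succ)))
    (a : V) (hia : kacInd a z) : a = z := by
  classical
  by_contra hne
  -- canonical representatives of measurable-indistinguishability classes
  let s : Setoid V := ⟨kacInd, ⟨kacInd_refl, kacInd_symm, kacInd_trans⟩⟩
  set rep : V → V := fun v => (Quotient.mk s v).out with hrepdef
  have hrep_ind : ∀ v, kacInd (rep v) v := fun v =>
    Quotient.exact (Quotient.out_eq (Quotient.mk s v))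
  have hrep_eq : ∀ u v, kacInd u v → rep u = rep v := by
    intro u v h
    show (Quotient.mk s u).out = (Quotient.mk s v).out
    rw [Quotient.sound (s := s) h]
  set R : Finset V := Finset.univ.image rep with hR
  have hrep_idem : ∀ r ∈ R, rep r = r := by
    intro r hr
    obtain ⟨u, _, rfl⟩ := Finset.mem_image.mp hr
    exact hrep_eq _ _ (hrep_ind u)
  -- the hulls have the same measure as the cylinders
  have hhull : ∀ l : List V, μ z (kacHull z l) = ENNReal.ofReal (kacWt P z l) := by
    intro l
    rw [← kacCyl_hull, kac_cyl_measure hchain]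
  -- partition of a hull according to the class of the next state
  have hpart : ∀ l : List V, kacHull z l = ⋃ r ∈ R, kacHull z (l ++ [r]) := by
    intro l
    ext ω
    simp only [Set.mem_iUnion]
    constructor
    · intro hω
      refine ⟨rep (ω (l.length + 1)), Finset.mem_image.mpr ⟨_, Finset.mem_univ _, rfl⟩, ?_⟩
      intro i
      have hi : i.val < l.length + 2 := by
        have := i.isLt
        simp at this; omega
      rcases Nat.lt_or_ge i.val (l.length + 1) with h | h
      · show kacInd (ω i.val) _
        rw [kacPath_append_lt _ l z i.val (by omega)]
        exact hω ⟨i.val, h⟩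
      · have hieq : i.val = l.length + 1 := by omega
        show kacInd (ω i.val) _
        rw [hieq, kacPath_append_last]
        exact kacInd_symm (hrep_ind (ω (l.length + 1)))
    · rintro ⟨r, _, hω⟩
      intro i
      have := hω ⟨i.val, by simpa using Nat.lt_succ_of_lt i.isLt⟩
      show kacInd (ω i.val) _
      rw [kacPath_append_lt _ l z i.val (by omega)] at this
      exact this
  -- measures add up over the partition
  have hmeaseq : ∀ l : List V,
      ENNReal.ofReal (kacWt P z l)
        = ∑ r ∈ R, ENNReal.ofReal (kacWt P z (l ++ [r])) := by
    intro l
    rw [← hhull l, hpart l, measure_biUnion_finset]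
    · exact Finset.sum_congr rfl fun r _ => hhull (l ++ [r])
    · intro r hr r' hr' hrr'
      rw [Function.onFun, Set.disjoint_left]
      intro ω h1 h2
      have e1 : kacInd (ω (l.length + 1)) r := by
        have := h1 ⟨l.length + 1, by simp⟩
        rwa [kacPath_append_last] at this
      have e2 : kacInd (ω (l.length + 1)) r' := by
        have := h2 ⟨l.length + 1, by simp⟩
        rwa [kacPath_append_last] at this
      have : r = r' := by
        rw [← hrep_idem r hr, ← hrep_idem r' hr', ← hrep_eq _ _ e1, ← hrep_eq _ _ e2]
      exact hrr' this
    · intro r _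
      exact kacHull_meas z (l ++ [r])
  have hreal : ∀ l : List V,
      kacWt P z l = ∑ r ∈ R, kacWt P z (l ++ [r]) := by
    intro l
    have h := hmeaseq l
    rw [← ENNReal.ofReal_sum_of_nonneg (fun r _ => kacWt_nonneg hnonneg _ _)] at h
    exact (ENNReal.ofReal_eq_ofReal_iff (kacWt_nonneg hnonneg _ _)
      (Finset.sum_nonneg fun r _ => kacWt_nonneg hnonneg _ _)).mp h
  -- consequence: the transition probabilities into the set of representatives sum to 1
  have key1 : ∀ v : V, ∑ r ∈ R, P v r = 1 := by
    intro v
    obtain ⟨l, hlast, hwt⟩ := kac_exists_path (z := z) hirr v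
    have h := hreal l
    have h2 : ∀ r ∈ R, kacWt P z (l ++ [r]) = kacWt P z l * P v r := by
      intro r _
      rw [kacWt_append, hlast]
    rw [Finset.sum_congr rfl h2, ← Finset.mul_sum] at h
    have := h.symm
    nth_rewrite 2 [← mul_one (kacWt P z l)] at this
    exact mul_left_cancel₀ hwt.ne' this
  -- the element y is in a nontrivial class and is not a representative
  set y : V := if rep z = z then a else z with hy
  have hyR : y ∉ R := by
    intro hyr
    have hidem := hrep_idem y hyr
    by_cases hz : rep z = z
    · rw [hy, if_pos hz] at hidem
      have h2 : rep a = rep z := hrep_eq a z hia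
      rw [hz] at h2
      rw [hidem] at h2
      exact hne h2
    · rw [hy, if_neg hz] at hidem
      exact hz hidem
  -- then nothing ever moves to y
  have key2 : ∀ v : V, P v y = 0 := by
    intro v
    have hsd : (∑ w ∈ Finset.univ \ R, P v w) + ∑ w ∈ R, P v w = ∑ w, P v w :=
      Finset.sum_sdiff (Finset.subset_univ R)
    rw [key1 v, hrow v] at hsd
    have hzero : ∑ w ∈ Finset.univ \ R, P v w = 0 := by linarith
    have := (Finset.sum_eq_zero_iff_of_nonneg
      (fun w _ => hnonneg v w)).mp hzero
    exact this y (Finset.mem_sdiff.mpr ⟨Finset.mem_univ y, hyR⟩)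
  -- contradiction with invariance and positivity of pi
  have : pi y = 0 := by
    rw [← hinv y]
    apply Finset.sum_eq_zero
    intro u _
    rw [key2 u, mul_zero]
  exact absurd this (hpos y).ne'

lemma kac_singleton_meas
    (hnonneg : ∀ u v, 0 ≤ P u v) (hrow : ∀ u, ∑ v, P u v = 1)
    (hirr : ∀ u v, Relation.ReflTransGen (fun a b => 0 < P a b) u v)
    {pi : V → ℝ} (hpos : ∀ v, 0 < pi v) (hinv : ∀ v, ∑ u, pi u * P u v = pi v)
    (hchain : ∀ (v : V) (n : ℕ) (path : Fin (n + 1) → V), path 0 = v →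
      μ v {ω | ∀ i : Fin (n + 1), ω i.val = path i} =
        ENNReal.ofReal (∏ i : Fin n, P (path i.castSucc) (path i.succ))) :
    MeasurableSet ({z} : Set V) := by
  have : ({z} : Set V) = {u | kacInd u z} := by
    ext u
    constructor
    · rintro rfl
      exact kacInd_refl u
    · intro h
      exact kac_no_bad hnonneg hrow hirr hpos hinv hchain u h
  rw [this]
  exact kacInd_atom_meas z

end Chain

end KacAux

end KacAuxiliary

/-- For a recurrent irreducible Markov chain on a finite state space with invariant measure `π`,
the expected return time to `z`, started at `z`, equals `π(S)/π(z)`.  (The expectation of the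
`ℕ∞`-valued return time is expressed as the sum of its tail probabilities.) -/
theorem stmt2 {V : Type*} [Fintype V] [Nonempty V] [MeasurableSpace V]
    (P : V → V → ℝ) (hnonneg : ∀ u v, 0 ≤ P u v) (hrow : ∀ u, ∑ v, P u v = 1)
    (hirr : ∀ u v, Relation.ReflTransGen (fun a b => 0 < P a b) u v)
    (pi : V → ℝ) (hpos : ∀ v, 0 < pi v) (hinv : ∀ v, ∑ u, pi u * P u v = pi v)
    (μ : V → Measure (ℕ → V)) (hprob : ∀ v, IsProbabilityMeasure (μ v))
    (hchain : ∀ (v : V) (n : ℕ) (path : Fin (n + 1) → V), path 0 = v →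
      μ v {ω | ∀ i : Fin (n + 1), ω i.val = path i} =
        ENNReal.ofReal (∏ i : Fin n, P (path i.castSucc) (path i.succ)))
    (z : V) :
    ∑' n : ℕ, μ z {ω | (n : ℕ∞) < hitTimePos {z} ω} =
      ENNReal.ofReal ((∑ v, pi v) / pi z) := by
  classical
  haveI := hprob z
  -- rewrite the events
  have hAset : ∀ n : ℕ, {ω : ℕ → V | (n : ℕ∞) < hitTimePos {z} ω}
      = {ω : ℕ → V | ∀ k : ℕ, 1 ≤ k → k ≤ n → ω k ≠ z} := by
    intro n
    ext ω
    simp only [Set.mem_setOf_eq]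
    constructor
    · intro h k hk1 hkn hz
      have hmem : (k : ℕ∞) ∈ {m : ℕ∞ | ∃ k' : ℕ, m = (k' : ℕ∞) ∧ 1 ≤ k' ∧ ω k' ∈ ({z} : Set V)} :=
        ⟨k, rfl, hk1, hz⟩
      have hle := sInf_le hmem
      have hlt := lt_of_lt_of_le h hle
      have : (n : ℕ∞) < (k : ℕ∞) := hlt
      rw [Nat.cast_lt] at this
      omega
    · intro h
      have h1 : ((n + 1 : ℕ) : ℕ∞) ≤ hitTimePos {z} ω := by
        apply le_sInf
        rintro m ⟨k, rfl, hk1, hkz⟩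
        have hkn : ¬ k ≤ n := fun hkn => h k hk1 hkn hkz
        exact_mod_cast Nat.succ_le_of_lt (Nat.lt_of_not_le hkn)
      refine lt_of_lt_of_le ?_ h1
      exact_mod_cast Nat.lt_succ_self n
  -- the set of trajectories starting at z
  set Nset : Set (ℕ → V) := (fun ω : ℕ → V => ω 0) ⁻¹' {z} with hNset
  have hNmeas : MeasurableSet Nset :=
    (measurable_pi_apply 0) (kac_singleton_meas hnonneg hrow hirr hpos hinv hchain)
  have hN1 : μ z Nset = 1 := by
    have h := hchain z 0 (fun _ => z) rfl
    have hset : {ω : ℕ → V | ∀ i : Fin 1, ω i.val = z} = Nset := by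
      ext ω
      constructor
      · intro hw
        exact hw 0
      · intro hw i
        have : i = 0 := Subsingleton.elim i 0
        rw [this]
        exact hw
    rw [hset] at h
    rw [h]
    simp
  have hNc : μ z Nsetᶜ = 0 := by
    rw [measure_compl hNmeas (measure_ne_top _ _), hN1, measure_univ, tsub_self]
  -- measure of the avoidance events
  have hμA : ∀ n : ℕ, μ z {ω : ℕ → V | ∀ k : ℕ, 1 ≤ k → k ≤ n → ω k ≠ z}
      = ENNReal.ofReal (kacG P z n z) := by
    intro n
    set A := {ω : ℕ → V | ∀ k : ℕ, 1 ≤ k → k ≤ n → ω k ≠ z} with hA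
    have hG0 : 0 ≤ kacG P z n z := kacG_nonneg hnonneg n z
    have hG1 : kacG P z n z ≤ 1 := kacG_le_one hnonneg hrow n z
    -- generic membership of cylinders
    have hcylmem : ∀ ω : ℕ → V, ω ∈ Nset →
        ω ∈ kacCyl z (List.ofFn (fun i : Fin n => ω (i.val + 1))) := by
      intro ω hω i
      have hlen : (List.ofFn (fun j : Fin n => ω (j.val + 1))).length = n :=
        List.length_ofFn
      rcases Nat.eq_zero_or_pos i.val with h0 | hpos'
      · rw [h0, kacPath_zero]
        exact hω
      · obtain ⟨k, hk⟩ : ∃ k, i.val = k + 1 := ⟨i.val - 1, by omega⟩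
        have hkn : k < n := by
          have h2 := i.isLt
          omega
        rw [hk, kacPath_ofFn n _ z k hkn]
    have hub : μ z (A ∩ Nset) ≤ ENNReal.ofReal (kacG P z n z) := by
      have hcov : A ∩ Nset ⊆
          ⋃ p ∈ Finset.univ.filter (fun p : Fin n → V => ∀ i, p i ≠ z),
            kacCyl z (List.ofFn p) := by
        rintro ω ⟨hωA, hωN⟩
        simp only [Set.mem_iUnion]
        refine ⟨fun i : Fin n => ω (i.val + 1), ?_, hcylmem ω hωN⟩
        rw [Finset.mem_filter]
        refine ⟨Finset.mem_univ _, fun i => hωA (i.val + 1) (by omega) (by omega)⟩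
      calc μ z (A ∩ Nset) ≤ μ z (⋃ p ∈ Finset.univ.filter
            (fun p : Fin n → V => ∀ i, p i ≠ z), kacCyl z (List.ofFn p)) :=
          measure_mono hcov
        _ ≤ ∑ p ∈ Finset.univ.filter (fun p : Fin n → V => ∀ i, p i ≠ z),
            μ z (kacCyl z (List.ofFn p)) := measure_biUnion_finset_le _ _
        _ = ∑ p ∈ Finset.univ.filter (fun p : Fin n → V => ∀ i, p i ≠ z),
            ENNReal.ofReal (kacWt P z (List.ofFn p)) :=
          Finset.sum_congr rfl fun p _ => kac_cyl_measure hchain _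
        _ = ENNReal.ofReal (∑ p ∈ Finset.univ.filter
            (fun p : Fin n → V => ∀ i, p i ≠ z), kacWt P z (List.ofFn p)) :=
          (ENNReal.ofReal_sum_of_nonneg fun p _ => kacWt_nonneg hnonneg _ _).symm
        _ = ENNReal.ofReal (kacG P z n z) := by
          rw [Finset.sum_filter, kacSum_avoid]
    have hlb : ENNReal.ofReal (kacG P z n z) ≤ μ z (A ∩ Nset) := by
      have hcov : Nset ⊆ (A ∩ Nset) ∪
          ⋃ p ∈ Finset.univ.filter (fun p : Fin n → V => ¬ ∀ i, p i ≠ z),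
            kacCyl z (List.ofFn p) := by
        intro ω hωN
        by_cases hωA : ω ∈ A
        · exact Or.inl ⟨hωA, hωN⟩
        · right
          simp only [Set.mem_iUnion]
          refine ⟨fun i : Fin n => ω (i.val + 1), ?_, hcylmem ω hωN⟩
          rw [Finset.mem_filter]
          refine ⟨Finset.mem_univ _, fun hall => hωA ?_⟩
          intro k hk1 hkn
          have : k - 1 < n := by omega
          have := hall ⟨k - 1, this⟩
          simpa [Nat.sub_add_cancel hk1] using this
      have hsum2 : ∑ p ∈ Finset.univ.filter (fun p : Fin n → V => ¬ ∀ i, p i ≠ z),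
          kacWt P z (List.ofFn p) = 1 - kacG P z n z := by
        have htot := Finset.sum_filter_add_sum_filter_not Finset.univ
          (fun p : Fin n → V => ∀ i, p i ≠ z) (fun p => kacWt P z (List.ofFn p))
        rw [kacSum_all hrow n z] at htot
        have h1 : ∑ p ∈ Finset.univ.filter (fun p : Fin n → V => ∀ i, p i ≠ z),
            kacWt P z (List.ofFn p) = kacG P z n z := by
          rw [Finset.sum_filter, kacSum_avoid]
        linarith
      have hchain2 : (1 : ENNReal) ≤ μ z (A ∩ Nset) + ENNReal.ofReal (1 - kacG P z n z) := by
        calc (1 : ENNReal) = μ z Nset := hN1.symm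
          _ ≤ μ z ((A ∩ Nset) ∪ ⋃ p ∈ Finset.univ.filter
              (fun p : Fin n → V => ¬ ∀ i, p i ≠ z), kacCyl z (List.ofFn p)) :=
            measure_mono hcov
          _ ≤ μ z (A ∩ Nset) + μ z (⋃ p ∈ Finset.univ.filter
              (fun p : Fin n → V => ¬ ∀ i, p i ≠ z), kacCyl z (List.ofFn p)) :=
            measure_union_le _ _
          _ ≤ μ z (A ∩ Nset) + ∑ p ∈ Finset.univ.filter
              (fun p : Fin n → V => ¬ ∀ i, p i ≠ z), μ z (kacCyl z (List.ofFn p)) := by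
            gcongr
            exact measure_biUnion_finset_le _ _
          _ = μ z (A ∩ Nset) + ENNReal.ofReal (1 - kacG P z n z) := by
            rw [Finset.sum_congr rfl fun p _ => kac_cyl_measure hchain _,
              ← ENNReal.ofReal_sum_of_nonneg fun p _ => kacWt_nonneg hnonneg _ _, hsum2]
      have hkey : ENNReal.ofReal (kacG P z n z) + ENNReal.ofReal (1 - kacG P z n z)
          = 1 := by
        rw [← ENNReal.ofReal_add hG0 (by linarith)]
        norm_num
      rw [← hkey] at hchain2
      exact (ENNReal.add_le_add_iff_right ENNReal.ofReal_ne_top).mp hchain2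
    have hsub : A ⊆ (A ∩ Nset) ∪ Nsetᶜ := by
      intro ω hω
      by_cases hωN : ω ∈ Nset
      · exact Or.inl ⟨hω, hωN⟩
      · exact Or.inr hωN
    apply le_antisymm
    · calc μ z A ≤ μ z ((A ∩ Nset) ∪ Nsetᶜ) := measure_mono hsub
        _ ≤ μ z (A ∩ Nset) + μ z Nsetᶜ := measure_union_le _ _
        _ = μ z (A ∩ Nset) := by rw [hNc, add_zero]
        _ ≤ ENNReal.ofReal (kacG P z n z) := hub
    · exact le_trans hlb (measure_mono Set.inter_subset_left)
  -- the real series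
  have hGnn : ∀ n : ℕ, 0 ≤ kacG P z n z := fun n => kacG_nonneg hnonneg n z
  have hparteq : ∀ N : ℕ, ∑ n ∈ Finset.range (N + 1), kacG P z n z
      = ((∑ v, pi v) - kacC P pi z N) / pi z := by
    intro N
    have h := kacC_partial (z := z) hinv N
    rw [eq_div_iff (hpos z).ne', mul_comm]
    linarith
  have htends : Filter.Tendsto (fun N => ∑ n ∈ Finset.range N, kacG P z n z)
      Filter.atTop (nhds ((∑ v, pi v) / pi z)) := by
    rw [← Filter.tendsto_add_atTop_iff_nat 1]
    have hc := kacC_tendsto (z := z) hnonneg hrow hirr hpos hinv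
    have h2 : Filter.Tendsto (fun N => ((∑ v, pi v) - kacC P pi z N) / pi z)
        Filter.atTop (nhds ((∑ v, pi v) / pi z)) := by
      have := ((tendsto_const_nhds (x := (∑ v, pi v))).sub hc).div_const (pi z)
      simpa using this
    apply h2.congr
    intro N
    exact (hparteq N).symm
  have hhs : HasSum (fun n => kacG P z n z) ((∑ v, pi v) / pi z) :=
    (hasSum_iff_tendsto_nat_of_nonneg hGnn _).mpr htends
  calc ∑' n : ℕ, μ z {ω | (n : ℕ∞) < hitTimePos {z} ω}
      = ∑' n : ℕ, ENNReal.ofReal (kacG P z n z) := by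
        apply tsum_congr
        intro n
        rw [hAset n, hμA n]
    _ = ENNReal.ofReal (∑' n, kacG P z n z) :=
        (ENNReal.ofReal_tsum_of_nonneg hGnn hhs.summable).symm
    _ = ENNReal.ofReal ((∑ v, pi v) / pi z) := by rw [hhs.tsum_eq]
end

section
/- Let β > 1, s ≥ 1, and let z = (x,y) be a vertex and z₀ = (x₀,y₀) with x₀ ≥ x − s, connected to z by a self-avoiding path q of at most s² edges, each edge having weight at least β^{x−s} (so resistance at most β^{s−x}). If the effective resistance from z₀ to infinity is at most 2β^{−x₀}/(β−1), then the effective resistance from z to infinity is at most β^{−x}(s²β^s + 2β^s/(β−1)), and the return probability of the weighted walk from z satisfies P(return to z) ≤ 1 − φ(s)^{−1} where φ(s) = β^s(s² + 2/(β−1))(3+β). -/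
/-- If `z = (x,y)` lies in a trap of size at most `s`, connected to a good point
`z₀ = (x₀,y₀)` (with `x₀ ≥ x − s`) by a path of resistance at most `s² β^{s−x}`, and
`R(z₀,∞) ≤ 2β^{−x₀}/(β−1)`, then `R(z,∞) ≤ β^{−x}(s²β^s + 2β^s/(β−1))` and the return
probability `1 − C(z,∞)/π(z)` is at most `1 − φ(s)⁻¹`, where
`φ(s) = β^s (s² + 2/(β−1)) (3+β)`. -/
theorem stmt19 (β : ℝ) (hβ : 1 < β) (s : ℕ) (hs : 1 ≤ s)
    (x x₀ : ℤ) (hx₀ : x - s ≤ x₀)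
    (Rzz0 Rz0inf Rzinf piz Czinf ret : ℝ)
    (hRzz0 : Rzz0 ≤ (s : ℝ) ^ 2 * β ^ ((s : ℤ) - x))
    (hRz0inf : Rz0inf ≤ 2 * β ^ (-x₀) / (β - 1))
    (hseries : Rzinf ≤ Rzz0 + Rz0inf)
    (hRpos : 0 < Rzinf)
    (hpi : piz ≤ β ^ x * (3 + β)) (hpipos : 0 < piz)
    (hC : Czinf = Rzinf⁻¹)
    (hret : ret = 1 - Czinf / piz) :
    Rzinf ≤ β ^ (-x) * ((s : ℝ) ^ 2 * β ^ (s : ℤ) + 2 * β ^ (s : ℤ) / (β - 1)) ∧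
    ret ≤ 1 - (β ^ (s : ℤ) * ((s : ℝ) ^ 2 + 2 / (β - 1)) * (3 + β))⁻¹ := by
  have hβ0 : (0:ℝ) < β := by linarith
  have hb1 : (0:ℝ) < β - 1 := by linarith
  have h1 : β ^ (-x₀) ≤ β ^ ((s:ℤ) - x) :=
    zpow_le_zpow_right₀ hβ.le (by linarith)
  have hkey : β ^ ((s:ℤ) - x) = β ^ (-x) * β ^ (s:ℤ) := by
    rw [← zpow_add₀ hβ0.ne']; ring_nf
  have hR : Rzinf ≤ β ^ (-x) * ((s : ℝ) ^ 2 * β ^ (s:ℤ) + 2 * β ^ (s:ℤ) / (β - 1)) := by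
    have h2 : Rz0inf ≤ 2 * β ^ ((s:ℤ) - x) / (β - 1) := by
      refine hRz0inf.trans ?_
      gcongr
    calc Rzinf ≤ Rzz0 + Rz0inf := hseries
      _ ≤ (s : ℝ) ^ 2 * β ^ ((s:ℤ) - x) + 2 * β ^ ((s:ℤ) - x) / (β - 1) := by
          linarith
      _ = β ^ (-x) * ((s : ℝ) ^ 2 * β ^ (s:ℤ) + 2 * β ^ (s:ℤ) / (β - 1)) := by
          rw [hkey]; ring
  refine ⟨hR, ?_⟩
  have hxx : β ^ (-x) * β ^ x = 1 := by
    rw [← zpow_add₀ hβ0.ne']; simp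
  have hφpos : 0 < β ^ (s:ℤ) * ((s : ℝ) ^ 2 + 2 / (β - 1)) * (3 + β) := by
    have h0 : (0:ℝ) < (s:ℝ) := by exact_mod_cast hs
    positivity
  have hprod : Rzinf * piz ≤ β ^ (s:ℤ) * ((s : ℝ) ^ 2 + 2 / (β - 1)) * (3 + β) := by
    have hpizb : (0:ℝ) < β ^ x * (3 + β) := by positivity
    have hRHSpos : 0 ≤ β ^ (-x) * ((s : ℝ) ^ 2 * β ^ (s:ℤ) + 2 * β ^ (s:ℤ) / (β - 1)) :=
      le_trans hRpos.le hR
    calc Rzinf * piz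
        ≤ (β ^ (-x) * ((s : ℝ) ^ 2 * β ^ (s:ℤ) + 2 * β ^ (s:ℤ) / (β - 1))) * (β ^ x * (3 + β)) := by
          apply mul_le_mul hR hpi hpipos.le hRHSpos
      _ = β ^ (s:ℤ) * ((s : ℝ) ^ 2 + 2 / (β - 1)) * (3 + β) := by
          field_simp
          nlinarith [hxx, sq_nonneg ((s:ℝ))]
  have hinv : (β ^ (s:ℤ) * ((s : ℝ) ^ 2 + 2 / (β - 1)) * (3 + β))⁻¹ ≤ (Rzinf * piz)⁻¹ :=
    inv_anti₀ (by positivity) hprod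
  have : Czinf / piz = (Rzinf * piz)⁻¹ := by
    rw [hC, mul_inv, div_eq_mul_inv]
  rw [hret, this]
  linarith
end
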